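/- arXiv:math-ph/0003019 — 5 statements merged into one kernel-verified Lean document; each statement's English description precedes it below -/
import Mathlib

section
/- For every ε ∈ (0,1] there exists a constant C_ε > 0 such that for all R ≥ 1, the double integral ∫₀^{π/2} ( ∫₀^{y} e^{−R(sin y − sin x)} dx ) dy is at most C_ε · R^{ε−1}. -/
open Real MeasureTheory

lemma exp_neg_le_rpow' {s t : ℝ} (hs : 0 < s) (ht0 : 0 ≤ t) (ht1 : t ≤ 1) :
    Real.exp (-s) ≤ s ^ (-t) := by
  rw [Real.rpow_neg hs.le, Real.exp_neg]
  have h2 : s ^ t ≤ Real.exp s := by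
    rcases le_total s 1 with h | h
    · calc s ^ t ≤ 1 := Real.rpow_le_one hs.le h ht0
        _ ≤ Real.exp s := by nlinarith [Real.add_one_le_exp s]
    · calc s ^ t ≤ s ^ (1:ℝ) := Real.rpow_le_rpow_of_exponent_le h ht1
        _ = s := Real.rpow_one s
        _ ≤ Real.exp s := by nlinarith [Real.add_one_le_exp s]
  exact inv_anti₀ (by positivity) h2

lemma sin_key' {x y : ℝ} (hx : 0 ≤ x) (hxy : x ≤ y) (hy : y ≤ π/2) :
    2/π^2 * ((y-x)*(π/2-y) + (y-x)^2) ≤ Real.sin y - Real.sin x := by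
  have hπ := Real.pi_pos
  have h1 : (y - x)/π ≤ Real.sin ((y-x)/2) := by
    have h := Real.mul_le_sin (x := (y-x)/2) (by linarith) (by linarith)
    calc (y-x)/π = 2/π * ((y-x)/2) := by ring
      _ ≤ _ := h
  have h2 : (π - (y+x))/π ≤ Real.cos ((y+x)/2) := by
    have h := Real.one_sub_mul_le_cos (x := (y+x)/2) (by linarith) (by linarith)
    calc (π - (y+x))/π = 1 - 2/π * ((y+x)/2) := by field_simp
      _ ≤ _ := h
  have hb1 : 0 ≤ (y-x)/π := div_nonneg (by linarith) hπ.le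
  have hb2 : 0 ≤ (π - (y+x))/π := by
    apply div_nonneg _ hπ.le; linarith
  have key : (y-x)/π * ((π - (y+x))/π) ≤ Real.sin ((y-x)/2) * Real.cos ((y+x)/2) :=
    mul_le_mul h1 h2 hb2 (hb1.trans h1)
  have key2 : 2/π^2 * ((y-x)*(π/2-y)+(y-x)^2) ≤ 2/π^2 * ((y-x)*(π-(y+x))) := by
    apply mul_le_mul_of_nonneg_left _ (by positivity)
    nlinarith [mul_nonneg (sub_nonneg.2 hxy) (sub_nonneg.2 hy)]
  refine key2.trans ?_
  rw [Real.sin_sub_sin]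
  have heq : 2/π^2 * ((y-x)*(π-(y+x))) = 2 * ((y-x)/π * ((π - (y+x))/π)) := by
    ring
  rw [heq, mul_assoc]
  linarith [key]

lemma pointwise_bd {R x y θ φ : ℝ} (hR : 1 ≤ R) (hx : 0 ≤ x) (hxy : x < y) (hy : y < π/2)
    (hθ0 : 0 ≤ θ) (hθ1 : θ ≤ 1) (hφ0 : 0 ≤ φ) (hφ1 : φ ≤ 1) :
    Real.exp (-R * (Real.sin y - Real.sin x)) ≤
      (2/π^2*R) ^ (-(θ+φ)) * (π/2-y) ^ (-θ) * (y-x) ^ (-(θ+2*φ)) := by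
  have hπ := Real.pi_pos
  have hR0 : 0 < R := by linarith
  have hu : 0 < y - x := by linarith
  have hv : 0 < π/2 - y := by linarith
  have hc : 0 < 2/π^2*R := by positivity
  have key := sin_key' hx hxy.le hy.le
  have key' := mul_le_mul_of_nonneg_left key hR0.le
  have hApos : 0 < 2/π^2*R*((y-x)*(π/2-y)) := by positivity
  have hBpos : 0 < 2/π^2*R*(y-x)^2 := by positivity
  have e1 : (2/π^2*R) ^ (-(θ+φ)) = (2/π^2*R) ^ (-θ) * (2/π^2*R) ^ (-φ) := by
    rw [show -(θ+φ) = -θ + -φ by ring, Real.rpow_add hc]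
  have e2 : (y-x) ^ (-(θ+2*φ)) = (y-x) ^ (-θ) * (y-x) ^ ((2:ℝ) * -φ) := by
    rw [show -(θ+2*φ) = -θ + (2:ℝ) * -φ by ring, Real.rpow_add hu]
  calc Real.exp (-R * (Real.sin y - Real.sin x))
      ≤ Real.exp (-(2/π^2*R*((y-x)*(π/2-y)) + 2/π^2*R*(y-x)^2)) := by
        apply Real.exp_le_exp.2
        nlinarith [key']
    _ = Real.exp (-(2/π^2*R*((y-x)*(π/2-y)))) * Real.exp (-(2/π^2*R*(y-x)^2)) := by
        rw [← Real.exp_add]; ring_nf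
    _ ≤ (2/π^2*R*((y-x)*(π/2-y))) ^ (-θ) * (2/π^2*R*(y-x)^2) ^ (-φ) :=
        mul_le_mul (exp_neg_le_rpow' hApos hθ0 hθ1) (exp_neg_le_rpow' hBpos hφ0 hφ1)
          (Real.exp_pos _).le (by positivity)
    _ = (2/π^2*R) ^ (-(θ+φ)) * (π/2-y) ^ (-θ) * (y-x) ^ (-(θ+2*φ)) := by
        rw [Real.mul_rpow hc.le (by positivity), Real.mul_rpow hu.le hv.le,
          Real.mul_rpow hc.le (by positivity),
          ← Real.rpow_natCast (y-x) 2, ← Real.rpow_mul hu.le, e1, e2]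
        push_cast
        ring

/-- For every ε ∈ (0,1] there exists C_ε > 0 such that for all R ≥ 1,
∫₀^{π/2} (∫₀^y e^{−R(sin y − sin x)} dx) dy ≤ C_ε · R^{ε−1}. -/
theorem stmt_0 :
    ∀ ε : ℝ, ε ∈ Set.Ioc (0 : ℝ) 1 →
      ∃ C : ℝ, 0 < C ∧ ∀ R : ℝ, 1 ≤ R →
        (∫ y in (0:ℝ)..(π / 2), ∫ x in (0:ℝ)..y,
            Real.exp (-R * (Real.sin y - Real.sin x)))
          ≤ C * R ^ (ε - 1) := by
  rintro ε ⟨hε0, hε1⟩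
  have hπ := Real.pi_pos
  set θ : ℝ := 1 - ε with hθ
  set φ : ℝ := ε/3 with hφ
  have hθ0 : 0 ≤ θ := by rw [hθ]; linarith
  have hθ1 : θ < 1 := by rw [hθ]; linarith
  have hφ0 : 0 < φ := by rw [hφ]; linarith
  have hφ1 : φ ≤ 1 := by rw [hφ]; linarith
  have hp1 : θ + 2*φ < 1 := by rw [hθ, hφ]; linarith
  have hp0 : 0 ≤ θ + 2*φ := by positivity
  have h1p : (0:ℝ) < 1 - (θ + 2*φ) := by linarith
  have h1θ : (0:ℝ) < 1 - θ := by linarith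
  set a : ℝ := 2/π^2 with ha
  have ha0 : 0 < a := by rw [ha]; positivity
  have hpi2 : (0:ℝ) < π/2 := by linarith
  have hC : 0 < a ^ (-(θ+φ)) * ((π/2) ^ (1-(θ+2*φ)) / (1-(θ+2*φ))) * ((π/2) ^ (1-θ) / (1-θ)) := by
    have c1 := Real.rpow_pos_of_pos ha0 (-(θ+φ))
    have c2 := Real.rpow_pos_of_pos hpi2 (1-(θ+2*φ))
    have c3 := Real.rpow_pos_of_pos hpi2 (1-θ)
    exact mul_pos (mul_pos c1 (div_pos c2 h1p)) (div_pos c3 h1θ)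
  refine ⟨a ^ (-(θ+φ)) * ((π/2) ^ (1-(θ+2*φ)) / (1-(θ+2*φ))) * ((π/2) ^ (1-θ) / (1-θ)),
    hC, ?_⟩
  intro R hR
  have hR0 : 0 < R := by linarith
  set q : ℝ := θ + φ with hq
  set p : ℝ := θ + 2*φ with hpdef
  set M : ℝ := (a*R) ^ (-q) * ((π/2) ^ (1-p) / (1-p)) with hM
  have hM0 : 0 ≤ M := by
    have c1 := Real.rpow_pos_of_pos (mul_pos ha0 hR0) (-q)
    have c2 := Real.rpow_pos_of_pos hpi2 (1-p)
    exact (mul_pos c1 (div_pos c2 h1p)).le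
  have hG : IntervalIntegrable (fun y => M * (π/2 - y) ^ (-θ)) volume 0 (π/2) := by
    apply IntervalIntegrable.const_mul
    have h := (intervalIntegral.intervalIntegrable_rpow' (a := 0) (b := π/2)
      (by linarith : (-1:ℝ) < -θ)).comp_sub_left (π/2)
    simpa using h.symm
  have hF : IntervalIntegrable
      (fun y => ∫ x in (0:ℝ)..y, Real.exp (-R * (Real.sin y - Real.sin x)))
      volume 0 (π/2) := by
    apply Continuous.intervalIntegrable
    have heq : (fun y => ∫ x in (0:ℝ)..y, Real.exp (-R * (Real.sin y - Real.sin x)))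
        = fun y => Real.exp (-R * Real.sin y) * ∫ x in (0:ℝ)..y, Real.exp (R * Real.sin x) := by
      funext y
      have hpt : ∀ x, Real.exp (-R * (Real.sin y - Real.sin x))
          = Real.exp (-R * Real.sin y) * Real.exp (R * Real.sin x) := by
        intro x; rw [← Real.exp_add]; congr 1; ring
      simp only [hpt, intervalIntegral.integral_const_mul]
    rw [heq]
    exact (Continuous.mul (by fun_prop)
      (intervalIntegral.continuous_primitive
        (fun c d => (Continuous.intervalIntegrable (by fun_prop) c d)) 0))
  have step1 : (∫ y in (0:ℝ)..(π/2), ∫ x in (0:ℝ)..y,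
      Real.exp (-R * (Real.sin y - Real.sin x)))
      ≤ ∫ y in (0:ℝ)..(π/2), M * (π/2 - y) ^ (-θ) := by
    apply intervalIntegral.integral_mono_ae_restrict hpi2.le hF hG
    have hne : ∀ᵐ y ∂(volume.restrict (Set.Icc (0:ℝ) (π/2))), y ≠ π/2 := by
      apply ae_restrict_of_ae
      rw [ae_iff]
      simpa using measure_singleton (π/2 : ℝ)
    have hmem : ∀ᵐ y ∂(volume.restrict (Set.Icc (0:ℝ) (π/2))), y ∈ Set.Icc (0:ℝ) (π/2) :=
      ae_restrict_mem measurableSet_Icc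
    filter_upwards [hne, hmem] with y hyne hymem
    obtain ⟨hy0, hy2⟩ := hymem
    have hy2' : y < π/2 := lt_of_le_of_ne hy2 hyne
    have hGy : IntervalIntegrable
        (fun x => (a*R) ^ (-q) * (π/2-y) ^ (-θ) * (y-x) ^ (-p)) volume 0 y := by
      apply IntervalIntegrable.const_mul
      have h := (intervalIntegral.intervalIntegrable_rpow' (a := 0) (b := y)
        (by linarith : (-1:ℝ) < -p)).comp_sub_left y
      simpa using h.symm
    have hFy : IntervalIntegrable
        (fun x => Real.exp (-R * (Real.sin y - Real.sin x))) volume 0 y :=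
      Continuous.intervalIntegrable (by fun_prop) 0 y
    have inner1 : (∫ x in (0:ℝ)..y, Real.exp (-R * (Real.sin y - Real.sin x)))
        ≤ ∫ x in (0:ℝ)..y, (a*R) ^ (-q) * (π/2-y) ^ (-θ) * (y-x) ^ (-p) := by
      apply intervalIntegral.integral_mono_ae_restrict hy0 hFy hGy
      have hxne : ∀ᵐ x ∂(volume.restrict (Set.Icc (0:ℝ) y)), x ≠ y := by
        apply ae_restrict_of_ae
        rw [ae_iff]
        simpa using measure_singleton (y : ℝ)
      have hxmem : ∀ᵐ x ∂(volume.restrict (Set.Icc (0:ℝ) y)), x ∈ Set.Icc (0:ℝ) y :=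
        ae_restrict_mem measurableSet_Icc
      filter_upwards [hxne, hxmem] with x hxne' hxmem'
      obtain ⟨hx0, hxy⟩ := hxmem'
      have hxy' : x < y := lt_of_le_of_ne hxy hxne'
      have hbd := pointwise_bd hR hx0 hxy' hy2' hθ0 hθ1.le hφ0.le hφ1
      calc Real.exp (-R * (Real.sin y - Real.sin x))
          ≤ (2/π^2*R) ^ (-(θ+φ)) * (π/2-y) ^ (-θ) * (y-x) ^ (-(θ+2*φ)) := hbd
        _ = (a*R) ^ (-q) * (π/2-y) ^ (-θ) * (y-x) ^ (-p) := by rw [ha, hq, hpdef]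
    have inner2 : (∫ x in (0:ℝ)..y, (a*R) ^ (-q) * (π/2-y) ^ (-θ) * (y-x) ^ (-p))
        = (a*R) ^ (-q) * (π/2-y) ^ (-θ) * (y ^ (1-p) / (1-p)) := by
      rw [intervalIntegral.integral_const_mul]
      congr 1
      have h1 : (∫ x in (0:ℝ)..y, (y-x) ^ (-p)) = ∫ x in (0:ℝ)..y, x ^ (-p) := by
        have h := intervalIntegral.integral_comp_sub_left (a := 0) (b := y)
          (fun x => x ^ (-p)) y
        simpa using h
      rw [h1, integral_rpow (Or.inl (by linarith : (-1:ℝ) < -p))]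
      rw [Real.zero_rpow (by linarith : -p + 1 ≠ 0)]
      rw [show -p + 1 = 1 - p by ring]
      ring
    refine inner1.trans ?_
    rw [inner2]
    have hyb : y ^ (1-p) / (1-p) ≤ (π/2) ^ (1-p) / (1-p) :=
      div_le_div_of_nonneg_right (Real.rpow_le_rpow hy0 hy2 (by linarith)) h1p.le
    calc (a*R) ^ (-q) * (π/2-y) ^ (-θ) * (y ^ (1-p) / (1-p))
        ≤ (a*R) ^ (-q) * (π/2-y) ^ (-θ) * ((π/2) ^ (1-p) / (1-p)) := by
          apply mul_le_mul_of_nonneg_left hyb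
          have c1 := Real.rpow_pos_of_pos (mul_pos ha0 hR0) (-q)
          have c2 := Real.rpow_pos_of_pos (by linarith : (0:ℝ) < π/2 - y) (-θ)
          positivity
      _ = M * (π/2-y) ^ (-θ) := by rw [hM]; ring
  have step2 : (∫ y in (0:ℝ)..(π/2), M * (π/2 - y) ^ (-θ))
      = M * ((π/2) ^ (1-θ) / (1-θ)) := by
    rw [intervalIntegral.integral_const_mul]
    congr 1
    have h1 : (∫ y in (0:ℝ)..(π/2), (π/2 - y) ^ (-θ)) = ∫ y in (0:ℝ)..(π/2), y ^ (-θ) := by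
      have h := intervalIntegral.integral_comp_sub_left (a := 0) (b := π/2)
        (fun x => x ^ (-θ)) (π/2)
      simpa using h
    rw [h1, integral_rpow (Or.inl (by linarith : (-1:ℝ) < -θ))]
    rw [Real.zero_rpow (by linarith : -θ + 1 ≠ 0)]
    rw [show -θ + 1 = 1 - θ by ring]
    ring
  refine step1.trans (step2.le.trans ?_)
  have hsplit : (a*R) ^ (-q) = a ^ (-q) * R ^ (-q) := Real.mul_rpow ha0.le hR0.le
  have hRq : R ^ (-q) ≤ R ^ (ε - 1) := by
    apply Real.rpow_le_rpow_of_exponent_le hR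
    rw [hq, hθ, hφ]; linarith
  calc M * ((π/2) ^ (1-θ) / (1-θ))
      = a ^ (-q) * ((π/2) ^ (1-p) / (1-p)) * ((π/2) ^ (1-θ) / (1-θ)) * R ^ (-q) := by
        rw [hM, hsplit]; ring
    _ ≤ a ^ (-q) * ((π/2) ^ (1-p) / (1-p)) * ((π/2) ^ (1-θ) / (1-θ)) * R ^ (ε-1) := by
        apply mul_le_mul_of_nonneg_left hRq
        have c1 := Real.rpow_pos_of_pos ha0 (-q)
        have c2 := Real.rpow_pos_of_pos hpi2 (1-p)
        have c3 := Real.rpow_pos_of_pos hpi2 (1-θ)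
        positivity
    _ = a ^ (-(θ+φ)) * ((π/2) ^ (1-(θ+2*φ)) / (1-(θ+2*φ))) * ((π/2) ^ (1-θ) / (1-θ)) * R ^ (ε-1) := by
        rw [hq, hpdef]
end

section
/- For every R > 0 and every y with 0 ≤ y < π/2, one has ∫₀^{y} e^{−R(sin y − sin x)} dx ≤ (π/(2R)) · (1 − e^{−(2R/π)(π/2 − y)·y}) / (π/2 − y). -/
open Real MeasureTheory

lemma sin_sub_lower {y : ℝ} (hy0 : 0 ≤ y) (hy : y ≤ π / 2) :
    ∀ x ∈ Set.Icc (0:ℝ) y, Real.cos y * (y - x) ≤ Real.sin y - Real.sin x := by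
  intro x hx
  have hdiff : Differentiable ℝ (fun t => Real.sin t - Real.cos y * t) :=
    Real.differentiable_sin.sub (differentiable_id.const_mul _)
  have hmono : MonotoneOn (fun t => Real.sin t - Real.cos y * t) (Set.Icc 0 y) := by
    apply monotoneOn_of_deriv_nonneg (convex_Icc 0 y) hdiff.continuous.continuousOn
      (fun t _ => (hdiff t).differentiableWithinAt)
    intro t ht
    rw [interior_Icc] at ht
    have hd : HasDerivAt (fun t => Real.sin t - Real.cos y * t) (Real.cos t - Real.cos y) t := by
      have h := (Real.hasDerivAt_sin t).sub ((hasDerivAt_id t).const_mul (Real.cos y))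
      simp only [id_eq, mul_one] at h
      exact h
    rw [hd.deriv]
    have : Real.cos y ≤ Real.cos t := by
      apply Real.cos_le_cos_of_nonneg_of_le_pi ht.1.le
      · linarith [Real.pi_pos]
      · exact ht.2.le
    linarith
  have := hmono hx (Set.right_mem_Icc.2 hy0) hx.2
  simp only at this
  nlinarith [this]

lemma key {y : ℝ} (hy0 : 0 ≤ y) (hy : y ≤ π / 2) :
    ∀ x ∈ Set.Icc (0:ℝ) y, 2 / π * (π / 2 - y) * (y - x) ≤ Real.sin y - Real.sin x := by
  intro x hx
  have hcos : 2 / π * (π / 2 - y) ≤ Real.cos y := by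
    have := Real.one_sub_mul_le_cos hy0 hy
    have hπ : (π:ℝ) ≠ 0 := Real.pi_ne_zero
    have : 1 - 2 / π * y ≤ Real.cos y := this
    calc 2 / π * (π / 2 - y) = 1 - 2 / π * y := by field_simp
      _ ≤ Real.cos y := this
  have hyx : 0 ≤ y - x := by linarith [hx.2]
  calc 2 / π * (π / 2 - y) * (y - x) ≤ Real.cos y * (y - x) :=
        mul_le_mul_of_nonneg_right hcos hyx
    _ ≤ Real.sin y - Real.sin x := sin_sub_lower hy0 hy x hx

/-- For R > 0 and 0 ≤ y < π/2,
∫₀^y e^{−R(sin y − sin x)} dx ≤ (π/(2R)) · (1 − e^{−(2R/π)(π/2−y)y})/(π/2 − y). -/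
theorem stmt_2 :
    ∀ R : ℝ, 0 < R → ∀ y : ℝ, 0 ≤ y → y < π / 2 →
      (∫ x in (0:ℝ)..y, Real.exp (-R * (Real.sin y - Real.sin x)))
        ≤ (π / (2 * R)) *
            (1 - Real.exp (-(2 * R / π) * (π / 2 - y) * y)) / (π / 2 - y) := by
  intro R hR y hy0 hy
  set c : ℝ := 2 * R / π * (π / 2 - y) with hc
  clear_value c
  have hπ := Real.pi_pos
  have hcpos : 0 < c := by
    rw [hc]; apply mul_pos (by positivity) (by linarith)
  -- step 1: pointwise bound gives integral bound
  have hstep : (∫ x in (0:ℝ)..y, Real.exp (-R * (Real.sin y - Real.sin x)))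
      ≤ ∫ x in (0:ℝ)..y, Real.exp (-c * (y - x)) := by
    apply intervalIntegral.integral_mono_on hy0
    · apply Continuous.intervalIntegrable
      continuity
    · apply Continuous.intervalIntegrable
      continuity
    · intro x hx
      apply Real.exp_le_exp.2
      have hk := key hy0 hy.le x hx
      have : 2 / π * (π / 2 - y) * (y - x) ≤ Real.sin y - Real.sin x := hk
      have hcx : c * (y - x) ≤ R * (Real.sin y - Real.sin x) := by
        have : R * (2 / π * (π / 2 - y) * (y - x)) ≤ R * (Real.sin y - Real.sin x) :=
          mul_le_mul_of_nonneg_left this hR.le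
        calc c * (y - x) = R * (2 / π * (π / 2 - y) * (y - x)) := by
              rw [hc]; ring
          _ ≤ _ := this
      linarith
  -- step 2: compute the integral
  have hcomp : (∫ x in (0:ℝ)..y, Real.exp (-c * (y - x)))
      = (1 - Real.exp (-c * y)) / c := by
    have : ∀ x : ℝ, Real.exp (-c * (y - x)) = Real.exp (c * x) * Real.exp (-c * y) := by
      intro x; rw [← Real.exp_add]; ring_nf
    simp_rw [this]
    rw [intervalIntegral.integral_mul_const,
      intervalIntegral.integral_comp_mul_left (fun x => Real.exp x) hcpos.ne']
    rw [integral_exp]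
    simp only [smul_eq_mul, mul_zero, Real.exp_zero]
    rw [neg_mul, Real.exp_neg]
    have hE := Real.exp_ne_zero (c * y)
    rw [eq_div_iff hcpos.ne']
    field_simp
  -- step 3: algebra
  have hrhs : (π / (2 * R)) * (1 - Real.exp (-(2 * R / π) * (π / 2 - y) * y)) / (π / 2 - y)
      = (1 - Real.exp (-c * y)) / c := by
    have h1 : -(2 * R / π) * (π / 2 - y) * y = -c * y := by rw [hc]; ring
    rw [h1, hc]
    field_simp
  rw [hrhs]
  linarith [hstep, hcomp.le, hcomp.ge]
end

section
/- For every ν ∈ ℂ there exists a constant C > 0 such that for all real r ≥ 1, |∫₀^{2π} e^{iνθ} e^{2ir·cos θ} dθ| ≤ C · r^{−1/2}. -/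
open Real MeasureTheory

noncomputable def fI (ν : ℂ) (r : ℝ) (θ : ℝ) : ℂ :=
  Complex.exp (Complex.I * ν * (θ : ℂ)) * Complex.exp (2 * Complex.I * (r : ℂ) * (Real.cos θ : ℂ))

noncomputable def gI (r θ : ℝ) : ℂ := -(2 * Complex.I * (r:ℂ) * (Real.sin θ : ℂ))
noncomputable def uI (ν : ℂ) (r θ : ℝ) : ℂ := Complex.exp (Complex.I * ν * (θ:ℂ)) * (gI r θ)⁻¹
noncomputable def vI (r θ : ℝ) : ℂ := Complex.exp (2 * Complex.I * (r:ℂ) * (Real.cos θ : ℂ))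
noncomputable def uI' (ν : ℂ) (r θ : ℝ) : ℂ :=
  (Complex.I * ν * Complex.exp (Complex.I * ν * (θ:ℂ))) * (gI r θ)⁻¹
  + Complex.exp (Complex.I * ν * (θ:ℂ)) * ((2 * Complex.I * (r:ℂ) * (Real.cos θ : ℂ)) / (gI r θ)^2)

noncomputable def MI (ν : ℂ) : ℝ := Real.exp (2*π*‖ν‖)

lemma MI_pos (ν : ℂ) : 0 < MI ν := Real.exp_pos _

lemma fI_cont (ν : ℂ) (r : ℝ) : Continuous (fI ν r) := by
  unfold fI; fun_prop

lemma gI_cont (r : ℝ) : Continuous (gI r) := by unfold gI; fun_prop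

lemma vI_cont (r : ℝ) : Continuous (vI r) := by unfold vI; fun_prop

lemma eexp_cont (ν : ℂ) : Continuous (fun θ : ℝ => Complex.exp (Complex.I * ν * (θ:ℂ))) := by
  fun_prop

lemma norm_exp_Inu (ν : ℂ) (θ : ℝ) (h0 : 0 ≤ θ) (h2 : θ ≤ 2*π) :
    ‖Complex.exp (Complex.I * ν * (θ : ℂ))‖ ≤ MI ν := by
  rw [Complex.norm_exp]
  apply Real.exp_le_exp.2
  have h3 : (Complex.I * ν * (θ : ℂ)).re = -ν.im * θ := by simp [Complex.mul_re]
  rw [h3]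
  have h1 : |ν.im| ≤ ‖ν‖ := Complex.abs_im_le_norm ν
  have hpi : 0 < π := Real.pi_pos
  nlinarith [neg_abs_le ν.im, abs_nonneg ν.im]

lemma norm_fI (ν : ℂ) (r θ : ℝ) (h0 : 0 ≤ θ) (h2 : θ ≤ 2*π) :
    ‖fI ν r θ‖ ≤ MI ν := by
  unfold fI
  rw [norm_mul]
  have h1 : ‖Complex.exp (2 * Complex.I * (r : ℂ) * (Real.cos θ : ℂ))‖ = 1 := by
    rw [Complex.norm_exp]
    simp [Complex.mul_re]
  rw [h1, mul_one]
  exact norm_exp_Inu ν θ h0 h2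

/-- trivial bound on a short interval -/
lemma triv_bound (ν : ℂ) (r c d : ℝ) (hc : 0 ≤ c) (hd : d ≤ 2*π) (hcd : c ≤ d) :
    ‖∫ θ in c..d, fI ν r θ‖ ≤ MI ν * (d - c) := by
  have h := intervalIntegral.norm_integral_le_of_norm_le_const
    (C := MI ν) (f := fI ν r) (a := c) (b := d) ?_
  · rwa [_root_.abs_of_nonneg (by linarith : (0:ℝ) ≤ d - c)] at h
  · intro x hx
    rw [Set.uIoc_of_le hcd] at hx
    exact norm_fI ν r x (le_trans hc hx.1.le) (le_trans hx.2 hd)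

lemma hasDerivAt_exp_Inu (ν : ℂ) (θ : ℝ) :
    HasDerivAt (fun t : ℝ => Complex.exp (Complex.I * ν * (t:ℂ)))
      (Complex.I * ν * Complex.exp (Complex.I * ν * (θ:ℂ))) θ := by
  have h1 : HasDerivAt (fun t : ℝ => ((t:ℝ):ℂ)) 1 θ := by
    simpa using (hasDerivAt_id θ).ofReal_comp
  have h2 := (h1.const_mul (Complex.I * ν)).cexp
  simpa [mul_comm] using h2

lemma hasDerivAt_gI (r θ : ℝ) :
    HasDerivAt (gI r) (-(2 * Complex.I * (r:ℂ) * (Real.cos θ : ℂ))) θ := by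
  have h1 : HasDerivAt (fun t : ℝ => ((Real.sin t : ℝ):ℂ)) ((Real.cos θ : ℂ)) θ :=
    (Real.hasDerivAt_sin θ).ofReal_comp
  have h2 := (h1.const_mul (2 * Complex.I * (r:ℂ))).neg
  unfold gI
  exact h2

lemma hasDerivAt_vI (r θ : ℝ) : HasDerivAt (vI r) (gI r θ * vI r θ) θ := by
  have h1 : HasDerivAt (fun t : ℝ => ((Real.cos t : ℝ):ℂ)) ((-Real.sin θ : ℝ):ℂ) θ :=
    (Real.hasDerivAt_cos θ).ofReal_comp
  have h2 := (h1.const_mul (2 * Complex.I * (r:ℂ))).cexp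
  have h3 : gI r θ * vI r θ = Complex.exp (2 * Complex.I * (r:ℂ) * (Real.cos θ : ℂ)) * (2 * Complex.I * (r:ℂ) * ((-Real.sin θ : ℝ):ℂ)) := by
    unfold gI vI; push_cast; ring
  rw [h3]
  exact h2

lemma gI_ne_zero (r θ : ℝ) (hθ : Real.sin θ ≠ 0) (hr : (1:ℝ) ≤ r) : gI r θ ≠ 0 := by
  unfold gI
  simp only [neg_ne_zero, mul_ne_zero_iff]
  refine ⟨⟨by norm_num [Complex.I_ne_zero], ?_⟩, by exact_mod_cast hθ⟩
  exact_mod_cast (by linarith : (0:ℝ) < r).ne'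

lemma hasDerivAt_uI (ν : ℂ) (r θ : ℝ) (hθ : Real.sin θ ≠ 0) (hr : (1:ℝ) ≤ r) :
    HasDerivAt (uI ν r) (uI' ν r θ) θ := by
  have hg := gI_ne_zero r θ hθ hr
  have h3 := HasDerivAt.comp θ (hasDerivAt_inv hg) (hasDerivAt_gI r θ)
  have h4 := (hasDerivAt_exp_Inu ν θ).mul h3
  have heq : uI ν r = fun t : ℝ => Complex.exp (Complex.I * ν * (t:ℂ)) * (Inv.inv ∘ gI r) t := rfl
  rw [heq]
  refine h4.congr_deriv ?_
  unfold uI'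
  simp only [Function.comp_apply]
  ring

lemma norm_gI (r θ : ℝ) (hr : (0:ℝ) ≤ r) : ‖gI r θ‖ = 2 * r * |Real.sin θ| := by
  unfold gI
  rw [norm_neg]
  simp only [norm_mul, Complex.norm_I, Complex.norm_two, Complex.norm_real, Real.norm_eq_abs]
  rw [_root_.abs_of_nonneg hr]
  ring

lemma norm_twoIrcos (r θ : ℝ) (hr : (0:ℝ) ≤ r) :
    ‖2 * Complex.I * (r:ℂ) * (Real.cos θ : ℂ)‖ = 2 * r * |Real.cos θ| := by
  simp only [norm_mul, Complex.norm_I, Complex.norm_two, Complex.norm_real, Real.norm_eq_abs]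
  rw [_root_.abs_of_nonneg hr]
  ring

lemma norm_vI (r θ : ℝ) : ‖vI r θ‖ = 1 := by
  unfold vI
  rw [Complex.norm_exp]
  simp [Complex.mul_re]

lemma norm_uI (ν : ℂ) (r θ s : ℝ) (hr : (1:ℝ) ≤ r) (hs : 0 < s) (hsin : s ≤ |Real.sin θ|)
    (h0 : 0 ≤ θ) (h2 : θ ≤ 2*π) :
    ‖uI ν r θ‖ ≤ MI ν / (2*r*s) := by
  have hr0 : (0:ℝ) < r := by linarith
  unfold uI
  rw [norm_mul, norm_inv, norm_gI r θ hr0.le]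
  have hE := norm_exp_Inu ν θ h0 h2
  have hM := (MI_pos ν).le
  have h1 : (2*r*|Real.sin θ|)⁻¹ ≤ (2*r*s)⁻¹ := by
    apply inv_anti₀ (by positivity)
    nlinarith
  calc ‖Complex.exp (Complex.I * ν * (θ:ℂ))‖ * (2*r*|Real.sin θ|)⁻¹
      ≤ MI ν * (2*r*s)⁻¹ := by
        apply mul_le_mul hE h1 (by positivity) hM
    _ = MI ν / (2*r*s) := by rw [div_eq_mul_inv]

lemma real_ineq (a E M t r co : ℝ) (ha : 0 ≤ a) (hE : 0 ≤ E) (hEM : E ≤ M) (ht0 : 0 < t)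
    (ht1 : t ≤ 1) (hco : 0 ≤ co) (hco1 : co ≤ 1) (hr : 1 ≤ r) :
    a * E * (2*r*t)⁻¹ + E * (2*r*co/(2*r*t)^2) ≤ M*(a+1)/(2*r) * (t^2)⁻¹ := by
  have hr0 : (0:ℝ) < r := lt_of_lt_of_le one_pos hr
  have h1 : a * E * (2*r*t)⁻¹ + E * (2*r*co/(2*r*t)^2) = (a*(E*t) + E*co) * (2*r*t^2)⁻¹ := by
    field_simp
  have h2 : M*(a+1)/(2*r)*(t^2)⁻¹ = (M*(a+1)) * (2*r*t^2)⁻¹ := by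
    field_simp
  rw [h1, h2]
  apply mul_le_mul_of_nonneg_right ?_ (by positivity)
  have hEt : E*t ≤ M := by nlinarith
  have h3 : a*(E*t) ≤ a*M := mul_le_mul_of_nonneg_left hEt ha
  have h4 : E*co ≤ M := by nlinarith
  nlinarith

lemma norm_uI' (ν : ℂ) (r θ s : ℝ) (hr : (1:ℝ) ≤ r) (hs : 0 < s) (hsin : s ≤ |Real.sin θ|)
    (h0 : 0 ≤ θ) (h2 : θ ≤ 2*π) :
    ‖uI' ν r θ‖ ≤ MI ν * (‖ν‖ + 1) / (2*r) * (Real.sin θ ^ 2)⁻¹ := by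
  have hr0 : (0:ℝ) < r := by linarith
  have ht0 : 0 < |Real.sin θ| := lt_of_lt_of_le hs hsin
  have ht1 : |Real.sin θ| ≤ 1 := abs_le.2 ⟨Real.neg_one_le_sin θ, Real.sin_le_one θ⟩
  have hE := norm_exp_Inu ν θ h0 h2
  have hM := (MI_pos ν).le
  have hsq : Real.sin θ ^ 2 = |Real.sin θ|^2 := (_root_.sq_abs _).symm
  have hcos : |Real.cos θ| ≤ 1 := abs_le.2 ⟨Real.neg_one_le_cos θ, Real.cos_le_one θ⟩
  have ha : (0:ℝ) ≤ ‖ν‖ := norm_nonneg ν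
  unfold uI'
  apply (norm_add_le _ _).trans
  simp only [norm_mul, norm_div, norm_inv, norm_pow]
  simp only [norm_gI r θ hr0.le]
  simp only [Complex.norm_I, Complex.norm_two, Complex.norm_real, Real.norm_eq_abs, one_mul]
  rw [_root_.abs_of_nonneg hr0.le, hsq]
  rw [show (2:ℝ)*1*r = 2*r by ring]
  have hE' : ‖Complex.exp (Complex.I * ν * (θ:ℂ))‖ ≤ MI ν := by
    exact hE
  exact real_ineq (‖ν‖) (‖Complex.exp (Complex.I * ν * (θ:ℂ))‖) (MI ν)
    |Real.sin θ| r |Real.cos θ| ha (norm_nonneg _) hE' ht0 ht1 (abs_nonneg _) hcos hr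


lemma hasDerivAt_negcot (θ : ℝ) (hθ : Real.sin θ ≠ 0) :
    HasDerivAt (fun t => -Real.cos t / Real.sin t) ((Real.sin θ ^ 2)⁻¹) θ := by
  have h := ((Real.hasDerivAt_cos θ).neg.div (Real.hasDerivAt_sin θ) hθ)
  refine h.congr_deriv ?_
  simp only [Pi.neg_apply, neg_neg]
  rw [inv_eq_one_div]
  congr 1
  nlinarith [Real.sin_sq_add_cos_sq θ]

lemma nonstat (ν : ℂ) (r c d s : ℝ) (hr : 1 ≤ r) (hs : 0 < s) (hcd : c ≤ d)
    (h0 : 0 ≤ c) (h2 : d ≤ 2*π)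
    (hsin : ∀ θ ∈ Set.Icc c d, s ≤ |Real.sin θ|) :
    ‖∫ θ in c..d, fI ν r θ‖ ≤ MI ν * (‖ν‖ + 2) / (r*s) := by
  have hr0 : (0:ℝ) < r := lt_of_lt_of_le one_pos hr
  have huIcc : Set.uIcc c d = Set.Icc c d := Set.uIcc_of_le hcd
  have hsne : ∀ θ ∈ Set.Icc c d, Real.sin θ ≠ 0 := by
    intro θ h hz
    have := hsin θ h
    rw [hz, abs_zero] at this
    linarith
  have hgne : ∀ θ ∈ Set.Icc c d, gI r θ ≠ 0 := fun θ h => gI_ne_zero r θ (hsne θ h) hr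
  -- continuity of uI'
  have hinv : ContinuousOn (fun θ => (gI r θ)⁻¹) (Set.Icc c d) :=
    (gI_cont r).continuousOn.inv₀ hgne
  have hcu' : ContinuousOn (uI' ν r) (Set.Icc c d) := by
    unfold uI'
    apply ContinuousOn.add
    · exact (Continuous.continuousOn (by fun_prop)).mul hinv
    · apply ((eexp_cont ν).continuousOn).mul
      apply ContinuousOn.div (Continuous.continuousOn (by fun_prop))
        ((gI_cont r).pow 2).continuousOn
      intro θ hθ
      exact pow_ne_zero 2 (hgne θ hθ)
  have hintu' : IntervalIntegrable (uI' ν r) volume c d := by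
    apply ContinuousOn.intervalIntegrable
    rwa [huIcc]
  have hintv' : IntervalIntegrable (fun θ => gI r θ * vI r θ) volume c d :=
    ((gI_cont r).mul (vI_cont r)).intervalIntegrable c d
  -- rewrite integrand
  have hstep1 : ∫ θ in c..d, fI ν r θ = ∫ θ in c..d, uI ν r θ * (gI r θ * vI r θ) := by
    apply intervalIntegral.integral_congr
    intro θ hθ
    rw [huIcc] at hθ
    have hg := hgne θ hθ
    unfold fI uI vI
    field_simp
  -- integration by parts
  have hibp := intervalIntegral.integral_mul_deriv_eq_deriv_mul
    (u := uI ν r) (v := vI r) (u' := uI' ν r) (v' := fun θ => gI r θ * vI r θ)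
    (fun x hx => hasDerivAt_uI ν r x (hsne x (huIcc ▸ hx)) hr)
    (fun x _ => hasDerivAt_vI r x)
    hintu' hintv'
  rw [hstep1, hibp]
  -- bounds
  have hb1 : ‖uI ν r d * vI r d‖ ≤ MI ν/(2*r*s) := by
    rw [norm_mul, norm_vI, mul_one]
    exact norm_uI ν r d s hr hs (hsin d ⟨hcd, le_refl d⟩) (h0.trans hcd) h2
  have hb2 : ‖uI ν r c * vI r c‖ ≤ MI ν/(2*r*s) := by
    rw [norm_mul, norm_vI, mul_one]
    exact norm_uI ν r c s hr hs (hsin c ⟨le_refl c, hcd⟩) h0 (hcd.trans h2)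
  have hb3 : ‖∫ θ in c..d, uI' ν r θ * vI r θ‖ ≤ MI ν * (‖ν‖ + 1)/(2*r) * (2/s) := by
    apply le_trans (intervalIntegral.norm_integral_le_integral_norm hcd)
    have hMp := MI_pos ν
    have hK : (0:ℝ) ≤ MI ν * (‖ν‖ + 1)/(2*r) := by positivity
    have hintuv : IntervalIntegrable (fun θ => uI' ν r θ * vI r θ) volume c d := by
      apply ContinuousOn.intervalIntegrable
      rw [huIcc]
      exact hcu'.mul (vI_cont r).continuousOn
    have hint2 : IntervalIntegrable (fun θ => MI ν * (‖ν‖ + 1)/(2*r) * (Real.sin θ^2)⁻¹) volume c d := by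
      apply ContinuousOn.intervalIntegrable
      rw [huIcc]
      apply ContinuousOn.mul continuousOn_const
      apply ContinuousOn.inv₀ ((Real.continuous_sin.pow 2).continuousOn)
      intro θ hθ
      exact pow_ne_zero 2 (hsne θ hθ)
    have hmono : ∫ θ in c..d, ‖uI' ν r θ * vI r θ‖
        ≤ ∫ θ in c..d, MI ν * (‖ν‖ + 1)/(2*r) * (Real.sin θ^2)⁻¹ := by
      apply intervalIntegral.integral_mono_on hcd hintuv.norm hint2
      intro θ hθ
      rw [norm_mul, norm_vI, mul_one]
      exact norm_uI' ν r θ s hr hs (hsin θ hθ) (h0.trans hθ.1) (hθ.2.trans h2)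
    apply hmono.trans
    rw [intervalIntegral.integral_const_mul]
    apply mul_le_mul_of_nonneg_left ?_ hK
    have hFTC : ∫ θ in c..d, (Real.sin θ^2)⁻¹
        = (-Real.cos d/Real.sin d) - (-Real.cos c/Real.sin c) := by
      apply intervalIntegral.integral_eq_sub_of_hasDerivAt
      · intro x hx
        exact hasDerivAt_negcot x (hsne x (huIcc ▸ hx))
      · apply ContinuousOn.intervalIntegrable
        rw [huIcc]
        apply ContinuousOn.inv₀ ((Real.continuous_sin.pow 2).continuousOn)
        intro θ hθ
        exact pow_ne_zero 2 (hsne θ hθ)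
    rw [hFTC]
    have hcot : ∀ θ ∈ Set.Icc c d, |Real.cos θ/Real.sin θ| ≤ 1/s := by
      intro θ hθ
      rw [abs_div]
      apply div_le_div₀ (by positivity) (abs_le.2 ⟨Real.neg_one_le_cos θ, Real.cos_le_one θ⟩)
        hs (hsin θ hθ)
    have hc1 := hcot c ⟨le_refl c, hcd⟩
    have hc2 := hcot d ⟨hcd, le_refl d⟩
    have ha1 := abs_le.1 hc1
    have ha2 := abs_le.1 hc2
    have e1 : -Real.cos d/Real.sin d = -(Real.cos d/Real.sin d) := by ring
    have e2 : -Real.cos c/Real.sin c = -(Real.cos c/Real.sin c) := by ring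
    rw [e1, e2]
    have : (2:ℝ)/s = 1/s + 1/s := by ring
    rw [this]
    linarith [ha1.1, ha1.2, ha2.1, ha2.2]
  calc ‖uI ν r d * vI r d - uI ν r c * vI r c - ∫ θ in c..d, uI' ν r θ * vI r θ‖
      ≤ ‖uI ν r d * vI r d - uI ν r c * vI r c‖ + ‖∫ θ in c..d, uI' ν r θ * vI r θ‖ :=
        norm_sub_le _ _
    _ ≤ (‖uI ν r d * vI r d‖ + ‖uI ν r c * vI r c‖) + ‖∫ θ in c..d, uI' ν r θ * vI r θ‖ := by
        gcongr
        exact norm_sub_le _ _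
    _ ≤ (MI ν/(2*r*s) + MI ν/(2*r*s)) + MI ν * (‖ν‖ + 1)/(2*r) * (2/s) := by
        gcongr
    _ = MI ν * (‖ν‖ + 2) / (r*s) := by
        field_simp
        ring

lemma sin_lb1 (δ : ℝ) (h1 : 0 < δ) (h2 : δ ≤ 1) :
    ∀ θ ∈ Set.Icc δ (π - δ), Real.sin δ ≤ |Real.sin θ| := by
  have hπ := Real.pi_gt_three
  intro θ hθ
  have hkey : Real.sin δ ≤ Real.sin θ := by
    rcases le_or_gt θ (π/2) with h | h
    · exact Real.sin_le_sin_of_le_of_le_pi_div_two (by linarith) h hθ.1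
    · rw [← Real.sin_pi_sub θ]
      exact Real.sin_le_sin_of_le_of_le_pi_div_two (by linarith) (by linarith [hθ.2])
        (by linarith [hθ.2])
  have hpos : 0 < Real.sin δ := Real.sin_pos_of_pos_of_lt_pi h1 (by linarith)
  rw [_root_.abs_of_nonneg (by linarith : (0:ℝ) ≤ Real.sin θ)]
  exact hkey

lemma sin_lb2 (δ : ℝ) (h1 : 0 < δ) (h2 : δ ≤ 1) :
    ∀ θ ∈ Set.Icc (π + δ) (2*π - δ), Real.sin δ ≤ |Real.sin θ| := by
  intro θ hθ
  have h3 : θ - π ∈ Set.Icc δ (π - δ) := ⟨by linarith [hθ.1], by linarith [hθ.2]⟩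
  have h4 := sin_lb1 δ h1 h2 (θ - π) h3
  have h5 : Real.sin θ = -Real.sin (θ - π) := by
    have h := Real.sin_add_pi (θ - π)
    rw [sub_add_cancel] at h
    exact h
  rw [h5, abs_neg]
  exact h4

/-- For every ν ∈ ℂ there exists C > 0 such that for all r ≥ 1,
|∫₀^{2π} e^{iνθ} e^{2ir cos θ} dθ| ≤ C · r^{−1/2}. -/
theorem stmt_3 :
    ∀ ν : ℂ, ∃ C : ℝ, 0 < C ∧ ∀ r : ℝ, 1 ≤ r →
      ‖(∫ θ in (0:ℝ)..(2 * π),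
          Complex.exp (Complex.I * ν * (θ : ℂ)) *
            Complex.exp (2 * Complex.I * (r : ℂ) * (Real.cos θ : ℂ)))‖
        ≤ C * r ^ (-(1 / 2) : ℝ) := by
  intro ν
  have hMp := MI_pos ν
  have hπ := Real.pi_gt_three
  have haν : (0:ℝ) ≤ ‖ν‖ := norm_nonneg ν
  refine ⟨MI ν * (4 + π * (‖ν‖ + 2)), by positivity, ?_⟩
  intro r hr
  have hr0 : (0:ℝ) < r := lt_of_lt_of_le one_pos hr
  set δ := r ^ (-(1/2) : ℝ) with hδdef
  have hδpos : 0 < δ := Real.rpow_pos_of_pos hr0 _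
  have hδ1 : δ ≤ 1 := Real.rpow_le_one_of_one_le_of_nonpos hr (by norm_num)
  have hδ2 : δ^2 = r⁻¹ := by
    rw [hδdef, ← Real.rpow_natCast (r ^ (-(1/2):ℝ)) 2, ← Real.rpow_mul hr0.le]
    norm_num [Real.rpow_neg_one]
  have hrδ2 : r * δ^2 = 1 := by
    rw [hδ2]
    field_simp
  have hsinδpos : 0 < Real.sin δ := Real.sin_pos_of_pos_of_lt_pi hδpos (by linarith)
  have hjordan : 2/π * δ ≤ Real.sin δ := Real.mul_le_sin hδpos.le (by linarith)
  -- key: MI ν * (abs ν + 2)/(r * sin δ) ≤ MI ν * (abs ν + 2) * (π/2) * δ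
  have hkey : MI ν * (‖ν‖ + 2)/(r * Real.sin δ) ≤ MI ν * (‖ν‖ + 2) * (π/2) * δ := by
    have hpos : 0 < r * Real.sin δ := by positivity
    rw [div_le_iff₀ hpos]
    have hge : (1:ℝ) ≤ (π/2) * δ * (r * Real.sin δ) := by
      have step : (2/π * δ) * ((π/2) * δ * r) ≤ Real.sin δ * ((π/2) * δ * r) := by
        apply mul_le_mul_of_nonneg_right hjordan (by positivity)
      have : (2/π * δ) * ((π/2) * δ * r) = 1 := by
        field_simp
        nlinarith [hrδ2]
      nlinarith [step, this]
    nlinarith [mul_le_mul_of_nonneg_left hge (by positivity : (0:ℝ) ≤ MI ν * (‖ν‖ + 2))]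
  -- splitting
  have hii : ∀ a b : ℝ, IntervalIntegrable (fI ν r) volume a b :=
    fun a b => (fI_cont ν r).intervalIntegrable a b
  have e1 := intervalIntegral.integral_add_adjacent_intervals (hii 0 δ) (hii δ (π - δ))
  have e2 := intervalIntegral.integral_add_adjacent_intervals (hii 0 (π - δ)) (hii (π - δ) (π + δ))
  have e3 := intervalIntegral.integral_add_adjacent_intervals (hii 0 (π + δ)) (hii (π + δ) (2*π - δ))
  have e4 := intervalIntegral.integral_add_adjacent_intervals (hii 0 (2*π - δ)) (hii (2*π - δ) (2*π))
  have hsum : ∫ θ in (0:ℝ)..(2*π), fI ν r θ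
      = ((((∫ θ in (0:ℝ)..δ, fI ν r θ) + ∫ θ in δ..(π - δ), fI ν r θ)
        + ∫ θ in (π - δ)..(π + δ), fI ν r θ)
        + ∫ θ in (π + δ)..(2*π - δ), fI ν r θ)
        + ∫ θ in (2*π - δ)..(2*π), fI ν r θ := by
    rw [e1, e2, e3, e4]
  -- individual bounds
  have B1 := triv_bound ν r 0 δ le_rfl (by linarith) hδpos.le
  have B3 := triv_bound ν r (π - δ) (π + δ) (by linarith) (by linarith) (by linarith)
  have B5 := triv_bound ν r (2*π - δ) (2*π) (by linarith) le_rfl (by linarith)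
  have B2 := nonstat ν r δ (π - δ) (Real.sin δ) hr hsinδpos (by linarith) hδpos.le
    (by linarith) (sin_lb1 δ hδpos hδ1)
  have B4 := nonstat ν r (π + δ) (2*π - δ) (Real.sin δ) hr hsinδpos (by linarith)
    (by linarith) (by linarith) (sin_lb2 δ hδpos hδ1)
  -- combine
  have hn : ‖∫ θ in (0:ℝ)..(2*π), fI ν r θ‖
      ≤ ‖∫ θ in (0:ℝ)..δ, fI ν r θ‖ + ‖∫ θ in δ..(π - δ), fI ν r θ‖
      + ‖∫ θ in (π - δ)..(π + δ), fI ν r θ‖ + ‖∫ θ in (π + δ)..(2*π - δ), fI ν r θ‖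
      + ‖∫ θ in (2*π - δ)..(2*π), fI ν r θ‖ := by
    rw [hsum]
    refine le_trans (norm_add_le _ _) ?_
    refine add_le_add ?_ le_rfl
    refine le_trans (norm_add_le _ _) ?_
    refine add_le_add ?_ le_rfl
    refine le_trans (norm_add_le _ _) ?_
    refine add_le_add ?_ le_rfl
    exact norm_add_le _ _
  have hgoal : ‖∫ θ in (0:ℝ)..(2*π), fI ν r θ‖ ≤ MI ν * (4 + π * (‖ν‖ + 2)) * δ := by
    have hB2' := B2.trans hkey
    have hB4' := B4.trans hkey
    linarith [hn, B1, B3, B5, hB2', hB4']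
  show ‖∫ θ in (0:ℝ)..(2*π), fI ν r θ‖ ≤ MI ν * (4 + π * (‖ν‖ + 2)) * r ^ (-(1/2):ℝ)
  exact hgoal
end

section
/- Let p ≥ 1 and let u₀, u₁, …, u_p, z₁, …, z_p be complex numbers that are all nonzero and pairwise distinct. For n, k ∈ {1, …, p} define B_{n,k} = ∏_{i=1}^{p} (u_i/z_i) + ∑_{j=1}^{p} [ u_n·u_k·(u₀ − z_j)·(z_j − u_j) / ( z_j·u₀·(z_j − u_n)·(z_j − u_k) ) ] · ∏_{i=1, i≠j}^{p} (u_i − z_j)/(z_i − z_j). Then B_{n,k} = 0 whenever n ≠ k, and B_{n,n} = u_n · ∏_{i=0, i≠n}^{p} (u_n − u_i) / ( u₀ · ∏_{i=1}^{p} (u_n − z_i) ). -/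
open Finset

/-- The quantity B_{n,k} of Lemma 4 (indices n,k ∈ {1,…,p} encoded by `Fin p`,
with `u : Fin (p+1) → ℂ` the points u₀,…,u_p and `z : Fin p → ℂ` the points
z₁,…,z_p). -/
noncomputable def Bnk (p : ℕ) (u : Fin (p + 1) → ℂ) (z : Fin p → ℂ)
    (n k : Fin p) : ℂ :=
  (∏ i : Fin p, u i.succ / z i) +
    ∑ j : Fin p,
      (u n.succ * u k.succ * (u 0 - z j) * (z j - u j.succ) /
          (z j * u 0 * (z j - u n.succ) * (z j - u k.succ))) *
        ∏ i ∈ univ.erase j, (u i.succ - z j) / (z i - z j)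

open Polynomial
lemma key_s8 {ι : Type*} [DecidableEq ι] (s : Finset ι) (v : ι → ℂ) (hvs : Set.InjOn v ↑s)
    (N : Polynomial ℂ) (hdeg : N.degree < (s.card - 1 : ℕ)) :
    ∑ j ∈ s, N.eval (v j) * ∏ i ∈ s.erase j, (v j - v i)⁻¹ = 0 := by
  have hdeg' : N.degree < s.card :=
    lt_of_lt_of_le hdeg (by exact_mod_cast Nat.sub_le s.card 1)
  have h := Lagrange.eq_interpolate hvs hdeg'
  have h2 := congrArg (fun q => Polynomial.coeff q (s.card - 1)) h
  simp only [Lagrange.interpolate_apply, Polynomial.finset_sum_coeff] at h2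
  rw [Polynomial.coeff_eq_zero_of_degree_lt hdeg] at h2
  rw [show ∑ j ∈ s, N.eval (v j) * ∏ i ∈ s.erase j, (v j - v i)⁻¹
      = ∑ b ∈ s, (C (eval (v b) N) * Lagrange.basis s v b).coeff (s.card - 1) from ?_, ← h2]
  apply Finset.sum_congr rfl
  intro i hi
  symm
  rw [Lagrange.basis_eq_prod_sub_inv_mul_nodal_div hi,
    ← Lagrange.nodal_erase_eq_nodal_div hi]
  rw [coeff_C_mul, coeff_C_mul]
  have hm : (Lagrange.nodal (s.erase i) v).natDegree = s.card - 1 := by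
    rw [Lagrange.natDegree_nodal, card_erase_of_mem hi]
  rw [← hm, (Lagrange.nodal_monic).coeff_natDegree]
  rw [Lagrange.nodalWeight]
  ring

lemma aux_erase_inl {α β : Type*} [Fintype α] [Fintype β] [DecidableEq α] [DecidableEq β]
    (a : α) : (univ : Finset (α ⊕ β)).erase (Sum.inl a) = (univ.erase a).disjSum univ := by
  ext x
  rcases x with x | x <;> simp

lemma aux_erase_inr {α β : Type*} [Fintype α] [Fintype β] [DecidableEq α] [DecidableEq β]
    (b : β) : (univ : Finset (α ⊕ β)).erase (Sum.inr b) = univ.disjSum (univ.erase b) := by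
  ext x
  rcases x with x | x <;> simp

lemma aux_prod_erase_succ {p : ℕ} (g : Fin (p + 1) → ℂ) (n : Fin p) :
    ∏ i ∈ (univ : Finset (Fin (p + 1))).erase n.succ, g i
      = g 0 * ∏ i ∈ (univ : Finset (Fin p)).erase n, g i.succ := by
  have hs : (univ : Finset (Fin (p + 1))).erase n.succ
      = insert (0 : Fin (p + 1))
          (((univ : Finset (Fin p)).erase n).map ⟨Fin.succ, Fin.succ_injective p⟩) := by
    ext a
    induction a using Fin.cases with
    | zero => simp [(Fin.succ_ne_zero n).symm]
    | succ b =>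
      simp [Fin.succ_ne_zero, Fin.succ_inj, (Fin.succ_injective p).eq_iff, eq_comm]
  rw [hs, prod_insert (by simp [(Fin.succ_ne_zero _).symm, eq_comm]), prod_map]
  rfl

set_option maxHeartbeats 1000000 in
lemma aux_diag (p : ℕ) (u : Fin (p + 1) → ℂ) (z : Fin p → ℂ)
    (hu0 : ∀ i, u i ≠ 0) (hz0 : ∀ j, z j ≠ 0)
    (huinj : Function.Injective u) (hzinj : Function.Injective z)
    (huz : ∀ i j, u i ≠ z j) (n : Fin p) :
    Bnk p u z n n =
      u n.succ * (∏ i ∈ univ.erase n.succ, (u n.succ - u i)) /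
        (u 0 * ∏ i : Fin p, (u n.succ - z i)) := by
  classical
  set v : Fin p ⊕ Fin 2 → ℂ := Sum.elim z ![0, u n.succ] with hv
  have hvinj : Function.Injective v := by
    rintro (a | a) (b | b) hab
    · exact congrArg Sum.inl (hzinj hab)
    · exfalso
      fin_cases b <;> simp [hv] at hab
      · exact hz0 a hab
      · exact huz n.succ a hab.symm
    · exfalso
      fin_cases a <;> simp [hv] at hab
      · exact hz0 b hab.symm
      · exact huz n.succ b hab
    · fin_cases a <;> fin_cases b <;> simp [hv] at hab ⊢
      · exact absurd hab.symm (hu0 n.succ)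
      · exact absurd hab (hu0 n.succ)
  have hinj : Set.InjOn v ↑(univ : Finset (Fin p ⊕ Fin 2)) := hvinj.injOn
  set N : Polynomial ℂ :=
    C (u n.succ ^ 2) * Lagrange.nodal ((univ : Finset (Fin (p + 1))).erase n.succ) u with hN
  have hnod : (Lagrange.nodal ((univ : Finset (Fin (p + 1))).erase n.succ) u).degree
      = (p : ℕ) := by
    rw [Lagrange.degree_nodal, card_erase_of_mem (mem_univ _), card_univ, Fintype.card_fin,
      Nat.add_sub_cancel]
  have hdeg : N.degree < (((univ : Finset (Fin p ⊕ Fin 2)).card - 1 : ℕ) : WithBot ℕ) := by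
    have h1 : ((univ : Finset (Fin p ⊕ Fin 2)).card - 1 : ℕ) = p + 1 := by
      simp [card_univ]
    rw [h1]
    refine lt_of_le_of_lt (degree_mul_le _ _) ?_
    rw [hnod]
    refine lt_of_le_of_lt (add_le_add_left (degree_C_le) _) ?_
    rw [zero_add]
    exact_mod_cast Nat.lt_succ_self p
  have hkey := key_s8 univ v hinj N hdeg
  have hNeval : ∀ t : ℂ, N.eval t
      = u n.succ ^ 2 * ((t - u 0) * ∏ i ∈ univ.erase n, (t - u i.succ)) := by
    intro t
    rw [hN, eval_mul, eval_C, Lagrange.eval_nodal, aux_prod_erase_succ]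
  have e0 : (univ : Finset (Fin 2)).erase 0 = {1} := by decide
  have e1 : (univ : Finset (Fin 2)).erase 1 = {0} := by decide
  rw [Fintype.sum_sum_type] at hkey
  simp only [aux_erase_inl, aux_erase_inr, prod_disjSum, hv, Sum.elim_inl, Sum.elim_inr,
    Fin.sum_univ_two, e0, e1, prod_singleton, Fin.prod_univ_two, Matrix.cons_val_zero,
    Matrix.cons_val_one, Matrix.head_cons] at hkey
  -- term identities
  have hzn : ∀ j, z j - u n.succ ≠ 0 := fun j => sub_ne_zero.2 (Ne.symm (huz n.succ j))
  have hun : u n.succ ≠ 0 := hu0 _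
  have hu00 : u 0 ≠ 0 := hu0 0
  have t0 : (∏ i : Fin p, u i.succ / z i)
      = -(u 0)⁻¹ * (eval 0 N * ((∏ x : Fin p, (0 - z x)⁻¹) * (0 - u n.succ)⁻¹)) := by
    rw [hNeval]
    have hL : ∏ i : Fin p, u i.succ / z i
        = (∏ i : Fin p, (0 - u i.succ)) * (∏ i : Fin p, (0 - z i)⁻¹) := by
      rw [← prod_mul_distrib]
      exact prod_congr rfl fun i _ => by
        rw [zero_sub, zero_sub, inv_neg, neg_mul_neg, div_eq_mul_inv]
    rw [hL, ← Finset.mul_prod_erase univ (fun i => (0:ℂ) - u i.succ) (mem_univ n),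
      prod_inv_distrib]
    simp only [zero_sub]
    have hB : (∏ x : Fin p, (-z x)) ≠ 0 :=
      prod_ne_zero_iff.2 fun i _ => neg_ne_zero.2 (hz0 i)
    set A := ∏ x ∈ univ.erase n, -u x.succ
    set B := ∏ x : Fin p, -z x
    field_simp
  have t1 : u n.succ * (∏ i ∈ univ.erase n.succ, (u n.succ - u i)) /
        (u 0 * ∏ i : Fin p, (u n.succ - z i))
      = (u 0)⁻¹ * (eval (u n.succ) N *
          ((∏ x : Fin p, (u n.succ - z x)⁻¹) * (u n.succ - 0)⁻¹)) := by
    rw [hNeval, aux_prod_erase_succ, prod_inv_distrib, sub_zero]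
    have hD : (∏ i : Fin p, (u n.succ - z i)) ≠ 0 :=
      prod_ne_zero_iff.2 fun i _ => sub_ne_zero.2 (huz n.succ i)
    field_simp
  have t3 : ∀ j : Fin p,
      (u n.succ * u n.succ * (u 0 - z j) * (z j - u j.succ) /
          (z j * u 0 * (z j - u n.succ) * (z j - u n.succ))) *
        ∏ i ∈ univ.erase j, (u i.succ - z j) / (z i - z j)
      = -(u 0)⁻¹ * (eval (z j) N * ((∏ i ∈ univ.erase j, (z j - z i)⁻¹) *
          ((z j - 0)⁻¹ * (z j - u n.succ)⁻¹))) := by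
    intro j
    rw [hNeval]
    have hflip : ∏ i ∈ univ.erase j, (u i.succ - z j) / (z i - z j)
        = (∏ i ∈ univ.erase j, (z j - u i.succ)) * (∏ i ∈ univ.erase j, (z j - z i)⁻¹) := by
      rw [← prod_mul_distrib]
      exact prod_congr rfl fun i _ => by
        rw [← neg_div_neg_eq, neg_sub, neg_sub, div_eq_mul_inv]
    rw [hflip, prod_inv_distrib]
    have hW : (∏ i ∈ univ.erase j, (z j - z i)) ≠ 0 :=
      prod_ne_zero_iff.2 fun i hi => sub_ne_zero.2 fun h => (mem_erase.1 hi).1 (hzinj h).symm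
    have hXY : (z j - u j.succ) * ∏ i ∈ univ.erase j, (z j - u i.succ)
        = (z j - u n.succ) * ∏ i ∈ univ.erase n, (z j - u i.succ) := by
      rw [Finset.mul_prod_erase univ (fun i => z j - u i.succ) (mem_univ j),
        Finset.mul_prod_erase univ (fun i => z j - u i.succ) (mem_univ n)]
    have hY : (∏ i ∈ univ.erase n, (z j - u i.succ))
        = (z j - u j.succ) * (∏ i ∈ univ.erase j, (z j - u i.succ)) / (z j - u n.succ) := by
      rw [eq_div_iff (hzn j)]
      linear_combination -hXY
    rw [hY, sub_zero]
    have hzj : z j ≠ 0 := hz0 j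
    have hzuj : z j - u j.succ ≠ 0 := sub_ne_zero.2 (Ne.symm (huz j.succ j))
    set X := ∏ i ∈ univ.erase j, (z j - u i.succ)
    set W := ∏ i ∈ univ.erase j, (z j - z i)
    field_simp
    ring
  rw [← sub_eq_zero, Bnk, t0, Finset.sum_congr rfl (fun j _ => t3 j), t1, ← Finset.mul_sum]
  linear_combination (-(u 0)⁻¹) * hkey

set_option maxHeartbeats 1000000 in
lemma aux_offdiag (p : ℕ) (u : Fin (p + 1) → ℂ) (z : Fin p → ℂ)
    (hu0 : ∀ i, u i ≠ 0) (hz0 : ∀ j, z j ≠ 0)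
    (huinj : Function.Injective u) (hzinj : Function.Injective z)
    (huz : ∀ i j, u i ≠ z j) (n k : Fin p) (hnk : n ≠ k) :
    Bnk p u z n k = 0 := by
  classical
  set v : Fin p ⊕ Fin 3 → ℂ := Sum.elim z ![0, u n.succ, u k.succ] with hv
  have hvinj : Function.Injective v := by
    rintro (a | a) (b | b) hab
    · exact congrArg Sum.inl (hzinj hab)
    · exfalso
      fin_cases b <;> simp [hv] at hab
      · exact hz0 a hab
      · exact huz n.succ a hab.symm
      · exact huz k.succ a hab.symm
    · exfalso
      fin_cases a <;> simp [hv] at hab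
      · exact hz0 b hab.symm
      · exact huz n.succ b hab
      · exact huz k.succ b hab
    · fin_cases a <;> fin_cases b <;> simp [hv] at hab ⊢
      · exact absurd hab.symm (hu0 n.succ)
      · exact absurd hab.symm (hu0 k.succ)
      · exact absurd hab (hu0 n.succ)
      · exact absurd (Fin.succ_injective p (huinj hab)) hnk
      · exact absurd hab (hu0 k.succ)
      · exact absurd (Fin.succ_injective p (huinj hab)) hnk.symm
  have hinj : Set.InjOn v ↑(univ : Finset (Fin p ⊕ Fin 3)) := hvinj.injOn
  set N : Polynomial ℂ :=
    C (u n.succ * u k.succ) * Lagrange.nodal (univ : Finset (Fin (p + 1))) u with hN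
  have hnod : (Lagrange.nodal (univ : Finset (Fin (p + 1))) u).degree = ((p + 1 : ℕ) : WithBot ℕ) := by
    rw [Lagrange.degree_nodal, card_univ, Fintype.card_fin]
  have hdeg : N.degree < (((univ : Finset (Fin p ⊕ Fin 3)).card - 1 : ℕ) : WithBot ℕ) := by
    have h1 : ((univ : Finset (Fin p ⊕ Fin 3)).card - 1 : ℕ) = p + 2 := by
      simp [card_univ]
    rw [h1]
    refine lt_of_le_of_lt (degree_mul_le _ _) ?_
    rw [hnod]
    refine lt_of_le_of_lt (add_le_add_left (degree_C_le) _) ?_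
    rw [zero_add]
    exact_mod_cast Nat.lt_succ_self (p + 1)
  have hkey := key_s8 univ v hinj N hdeg
  have hNeval : ∀ t : ℂ, N.eval t
      = u n.succ * u k.succ * ((t - u 0) * ∏ i : Fin p, (t - u i.succ)) := by
    intro t
    rw [hN, eval_mul, eval_C, Lagrange.eval_nodal, Fin.prod_univ_succ]
  have e0 : (univ : Finset (Fin 3)).erase 0 = {1, 2} := by decide
  have e1 : (univ : Finset (Fin 3)).erase 1 = {0, 2} := by decide
  have e2 : (univ : Finset (Fin 3)).erase 2 = {0, 1} := by decide
  have q0 : ∀ f : Fin 3 → ℂ, ∏ x ∈ ({1, 2} : Finset (Fin 3)), f x = f 1 * f 2 :=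
    fun f => prod_pair (by decide)
  have q1 : ∀ f : Fin 3 → ℂ, ∏ x ∈ ({0, 2} : Finset (Fin 3)), f x = f 0 * f 2 :=
    fun f => prod_pair (by decide)
  have q2 : ∀ f : Fin 3 → ℂ, ∏ x ∈ ({0, 1} : Finset (Fin 3)), f x = f 0 * f 1 :=
    fun f => prod_pair (by decide)
  rw [Fintype.sum_sum_type] at hkey
  simp only [aux_erase_inl, aux_erase_inr, prod_disjSum, hv, Sum.elim_inl, Sum.elim_inr,
    Fin.sum_univ_three, e0, e1, e2, q0, q1, q2,
    Fin.prod_univ_three, Matrix.cons_val_zero, Matrix.cons_val_one, Matrix.head_cons,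
    Matrix.cons_val_two, Matrix.tail_cons] at hkey
  have hv1 : N.eval (u n.succ) = 0 := by
    rw [hNeval, prod_eq_zero (mem_univ n) (sub_self (u n.succ))]
    ring
  have hv2 : N.eval (u k.succ) = 0 := by
    rw [hNeval, prod_eq_zero (mem_univ k) (sub_self (u k.succ))]
    ring
  simp only [hv1, hv2, zero_mul, add_zero] at hkey
  have hun : u n.succ ≠ 0 := hu0 _
  have huk : u k.succ ≠ 0 := hu0 _
  have hu00 : u 0 ≠ 0 := hu0 0
  have t0 : (∏ i : Fin p, u i.succ / z i)
      = -(u 0)⁻¹ * (eval 0 N * ((∏ x : Fin p, (0 - z x)⁻¹) *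
          ((0 - u n.succ)⁻¹ * (0 - u k.succ)⁻¹))) := by
    rw [hNeval]
    have hL : ∏ i : Fin p, u i.succ / z i
        = (∏ i : Fin p, (0 - u i.succ)) * (∏ i : Fin p, (0 - z i)⁻¹) := by
      rw [← prod_mul_distrib]
      exact prod_congr rfl fun i _ => by
        rw [zero_sub, zero_sub, inv_neg, neg_mul_neg, div_eq_mul_inv]
    rw [hL, prod_inv_distrib]
    simp only [zero_sub]
    have hB : (∏ x : Fin p, (-z x)) ≠ 0 :=
      prod_ne_zero_iff.2 fun i _ => neg_ne_zero.2 (hz0 i)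
    set A := ∏ x : Fin p, -u x.succ
    set B := ∏ x : Fin p, -z x
    field_simp
  have t3 : ∀ j : Fin p,
      (u n.succ * u k.succ * (u 0 - z j) * (z j - u j.succ) /
          (z j * u 0 * (z j - u n.succ) * (z j - u k.succ))) *
        ∏ i ∈ univ.erase j, (u i.succ - z j) / (z i - z j)
      = -(u 0)⁻¹ * (eval (z j) N * ((∏ i ∈ univ.erase j, (z j - z i)⁻¹) *
          ((z j - 0)⁻¹ * (z j - u n.succ)⁻¹ * (z j - u k.succ)⁻¹))) := by
    intro j
    rw [hNeval]
    have hflip : ∏ i ∈ univ.erase j, (u i.succ - z j) / (z i - z j)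
        = (∏ i ∈ univ.erase j, (z j - u i.succ)) * (∏ i ∈ univ.erase j, (z j - z i)⁻¹) := by
      rw [← prod_mul_distrib]
      exact prod_congr rfl fun i _ => by
        rw [← neg_div_neg_eq, neg_sub, neg_sub, div_eq_mul_inv]
    rw [hflip, prod_inv_distrib,
      ← Finset.mul_prod_erase univ (fun i => z j - u i.succ) (mem_univ j), sub_zero]
    have hW : (∏ i ∈ univ.erase j, (z j - z i)) ≠ 0 :=
      prod_ne_zero_iff.2 fun i hi => sub_ne_zero.2 fun h => (mem_erase.1 hi).1 (hzinj h).symm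
    have hzj : z j ≠ 0 := hz0 j
    have hznj : z j - u n.succ ≠ 0 := sub_ne_zero.2 (Ne.symm (huz n.succ j))
    have hzkj : z j - u k.succ ≠ 0 := sub_ne_zero.2 (Ne.symm (huz k.succ j))
    set X := ∏ i ∈ univ.erase j, (z j - u i.succ)
    set W := ∏ i ∈ univ.erase j, (z j - z i)
    field_simp
    ring
  rw [Bnk, t0, Finset.sum_congr rfl fun j _ => t3 j, ← Finset.mul_sum]
  linear_combination (-(u 0)⁻¹) * hkey

/-- Partial-fraction / residue identity: for nonzero pairwise distinct
u₀,…,u_p, z₁,…,z_p, B_{n,k} = 0 for n ≠ k, and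
B_{n,n} = uₙ · ∏_{i=0,i≠n}^p (uₙ−uᵢ) / (u₀ · ∏_{i=1}^p (uₙ−zᵢ)). -/
theorem stmt_8 (p : ℕ) (hp : 1 ≤ p) (u : Fin (p + 1) → ℂ) (z : Fin p → ℂ)
    (hu0 : ∀ i, u i ≠ 0) (hz0 : ∀ j, z j ≠ 0)
    (huinj : Function.Injective u) (hzinj : Function.Injective z)
    (huz : ∀ i j, u i ≠ z j) :
    ∀ n k : Fin p,
      (n ≠ k → Bnk p u z n k = 0) ∧
      Bnk p u z n n =
        u n.succ * (∏ i ∈ univ.erase n.succ, (u n.succ - u i)) /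
          (u 0 * ∏ i : Fin p, (u n.succ - z i)) := by
  intro n k
  exact ⟨fun hnk => aux_offdiag p u z hu0 hz0 huinj hzinj huz n k hnk,
    aux_diag p u z hu0 hz0 huinj hzinj huz n⟩
end

section
/- Let p ≥ 1, a₀, …, a_p ∈ ℂ and b₁, …, b_p ∈ ℂ, fix j ∈ {1, …, p}, and assume b_j ∉ ℤ, b_k − b_j ∉ ℤ for all k ≠ j, and no b_k is a nonpositive integer. Define u_j(z) = z^{1−b_j} · F(a₀−b_j+1, …, a_p−b_j+1; {b_k−b_j+1}_{k≠j}, 2−b_j; z) on the slit disc D = { z : 0 < |z| < 1, z ∉ (−1, 0] }, where z^{1−b_j} is the principal branch. Then u_j is annihilated on D by the generalized hypergeometric operator with parameters a₀,…,a_p; b₁,…,b_p: ( d/dz ∘ (θ + b₁ − 1) ∘ ⋯ ∘ (θ + b_p − 1) ) u_j(z) = ( (θ + a₀) ∘ ⋯ ∘ (θ + a_p) ) u_j(z) for z ∈ D. -/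
open Finset

/-- The generalized hypergeometric series
F(a₀,…,a_p; b₁,…,b_p; z) = ∑ₙ ((a₀)ₙ⋯(a_p)ₙ)/((b₁)ₙ⋯(b_p)ₙ · n!) · zⁿ. -/
noncomputable def hyperF {p : ℕ} (a : Fin (p + 1) → ℂ) (b : Fin p → ℂ) (z : ℂ) : ℂ :=
  ∑' n : ℕ,
    ((∏ i, (ascPochhammer ℂ n).eval (a i)) /
        ((∏ i, (ascPochhammer ℂ n).eval (b i)) * (n.factorial : ℂ))) * z ^ n

/-- The operator f ↦ θf + c·f, where (θf)(z) = z·f′(z). -/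
noncomputable def thetaAdd (c : ℂ) (f : ℂ → ℂ) : ℂ → ℂ :=
  fun z => z * deriv f z + c * f z

/-- The slit disc D = { z : 0 < |z| < 1, z ∉ (−1,0] }. -/
def slitDisc : Set ℂ :=
  {z : ℂ | 0 < ‖z‖ ∧ ‖z‖ < 1 ∧
    ¬(z.im = 0 ∧ -1 < z.re ∧ z.re ≤ 0)}

namespace HypAux

open Filter Topology

lemma re_gt_neg_one {z : ℂ} (h1 : ‖z‖ < 1) : -1 < z.re :=
  (abs_lt.mp (lt_of_le_of_lt (Complex.abs_re_le_norm z) h1)).1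

lemma slitDisc_eq : slitDisc = Metric.ball (0:ℂ) 1 \ {z : ℂ | z.im = 0 ∧ z.re ≤ 0} := by
  ext z
  simp only [slitDisc, Set.mem_setOf_eq, Set.mem_diff, Metric.mem_ball, dist_zero_right]
  constructor
  · rintro ⟨h0, h1, h2⟩
    exact ⟨h1, fun ⟨him, hre⟩ => h2 ⟨him, re_gt_neg_one h1, hre⟩⟩
  · rintro ⟨h1, h2⟩
    refine ⟨?_, h1, fun ⟨him, _, hre⟩ => h2 ⟨him, hre⟩⟩
    rcases eq_or_ne z 0 with rfl | hz
    · exact absurd ⟨rfl, le_refl 0⟩ h2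
    · exact norm_pos_iff.mpr hz

lemma isOpen_slitDisc : IsOpen slitDisc := by
  rw [slitDisc_eq]
  refine IsOpen.sdiff Metric.isOpen_ball ?_
  have : {z : ℂ | z.im = 0 ∧ z.re ≤ 0} = {z : ℂ | z.im = 0} ∩ {z : ℂ | z.re ≤ 0} := rfl
  rw [this]
  exact (isClosed_eq Complex.continuous_im continuous_const).inter
    (isClosed_le Complex.continuous_re continuous_const)

lemma slitDisc_ne_zero {z : ℂ} (hz : z ∈ slitDisc) : z ≠ 0 := by
  intro h; rw [slitDisc_eq] at hz; exact hz.2 (by simp [h])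

lemma slitDisc_norm_lt_one {z : ℂ} (hz : z ∈ slitDisc) : ‖z‖ < 1 := by
  exact hz.2.1

lemma slitDisc_mem_slitPlane {z : ℂ} (hz : z ∈ slitDisc) : z ∈ Complex.slitPlane := by
  obtain ⟨h0, h1, h2⟩ := hz
  by_cases him : z.im = 0
  · left
    by_contra hre
    push_neg at hre
    exact h2 ⟨him, re_gt_neg_one h1, hre⟩
  · right; exact him

lemma eventually_add_ne (y : ℂ) : ∀ᶠ n : ℕ in atTop, ((n : ℂ) + y) ≠ 0 := by
  filter_upwards [eventually_gt_atTop ⌈‖y‖⌉₊] with n hn h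
  have h1 : (n : ℝ) = ‖y‖ := by
    have h2 : (n : ℂ) = -y := by linear_combination h
    have := congrArg norm h2
    simpa using this
  have : ‖y‖ < (n : ℝ) := lt_of_le_of_lt (Nat.le_ceil _) (Nat.cast_lt.mpr hn)
  linarith

lemma tendsto_ratio (x y : ℂ) :
    Tendsto (fun n : ℕ => ((n : ℂ) + x) / ((n : ℂ) + y)) atTop (𝓝 1) := by
  have heq : ∀ᶠ n : ℕ in atTop,
      1 + (x - y) / ((n : ℂ) + y) = ((n : ℂ) + x) / ((n : ℂ) + y) := by
    filter_upwards [eventually_add_ne y] with n hn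
    field_simp
    ring
  have hsub : Tendsto (fun n : ℕ => (n : ℝ) - ‖y‖) atTop atTop := by
    simpa [sub_eq_add_neg] using
      tendsto_atTop_add_const_right atTop (-‖y‖) tendsto_natCast_atTop_atTop
  have h0 : Tendsto (fun n : ℕ => (x - y) / ((n : ℂ) + y)) atTop (𝓝 0) := by
    apply squeeze_zero_norm' (a := fun n : ℕ => ‖x - y‖ / ((n : ℝ) - ‖y‖))
    · filter_upwards [eventually_gt_atTop ⌈‖y‖⌉₊] with n hn
      have hny : ‖y‖ < (n : ℝ) := lt_of_le_of_lt (Nat.le_ceil _) (Nat.cast_lt.mpr hn)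
      have hpos : (0:ℝ) < (n : ℝ) - ‖y‖ := by linarith
      have hle : (n : ℝ) - ‖y‖ ≤ ‖(n : ℂ) + y‖ := by
        have := norm_add_le ((n : ℂ) + y) (-y)
        simp only [add_neg_cancel_right, norm_neg] at this
        have hn' : ‖(n : ℂ)‖ = (n : ℝ) := by simp
        linarith
      rw [norm_div]
      exact div_le_div_of_nonneg_left (norm_nonneg _) hpos hle
    · exact Tendsto.div_atTop tendsto_const_nhds hsub
  have := h0.const_add (1:ℂ)
  rw [tendsto_congr' heq] at this
  simpa using this

variable {p : ℕ} (a : Fin (p + 1) → ℂ) (b : Fin p → ℂ) (j : Fin p)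

/-- shifted upper parameters -/
noncomputable def aa (i : Fin (p + 1)) : ℂ := a i - b j + 1

/-- shifted lower parameters -/
noncomputable def bb (k : Fin p) : ℂ := if k = j then 2 - b j else b k - b j + 1

/-- coefficients of the shifted hypergeometric series -/
noncomputable def coA (n : ℕ) : ℂ :=
  (∏ i, (ascPochhammer ℂ n).eval (aa a b j i)) /
    ((∏ k, (ascPochhammer ℂ n).eval (bb b j k)) * (n.factorial : ℂ))

/-- product of linear factors -/
def QL (L : List ℂ) (n : ℕ) : ℂ := (L.map fun d => (n : ℂ) + d).prod

/-- generalized series with extra polynomial factor -/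
noncomputable def GG (L : List ℂ) (z : ℂ) : ℂ := ∑' n : ℕ, coA a b j n * QL L n * z ^ n

variable (hbj : ∀ m : ℤ, b j ≠ (m : ℂ)) (hbk : ∀ k, k ≠ j → ∀ m : ℤ, b k - b j ≠ (m : ℂ))

section
include hbj hbk

lemma bb_add_ne (k : Fin p) (n : ℕ) : bb b j k + (n : ℂ) ≠ 0 := by
  unfold bb
  split_ifs with h
  · intro hc
    exact hbj (n + 2) (by push_cast; linear_combination -hc)
  · intro hc
    exact hbk k h (-(n + 1)) (by push_cast; linear_combination hc)

lemma poch_bb_ne (n : ℕ) : (∏ k, (ascPochhammer ℂ n).eval (bb b j k)) ≠ 0 := by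
  apply Finset.prod_ne_zero_iff.mpr
  intro k _
  induction n with
  | zero => simp
  | succ m ih =>
    rw [ascPochhammer_succ_eval]
    exact mul_ne_zero ih (bb_add_ne b j hbj hbk k m)

lemma coA_rec (n : ℕ) :
    coA a b j (n + 1) * ((∏ k, (bb b j k + (n : ℂ))) * ((n : ℂ) + 1)) =
      coA a b j n * ∏ i, (aa a b j i + (n : ℂ)) := by
  unfold coA
  simp only [ascPochhammer_succ_eval, Finset.prod_mul_distrib, Nat.factorial_succ,
    Nat.cast_mul, Nat.cast_add, Nat.cast_one]
  have hB := poch_bb_ne b j hbj hbk n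
  have hfac : ((n.factorial : ℂ)) ≠ 0 := Nat.cast_ne_zero.mpr n.factorial_ne_zero
  have hn1 : ((n : ℂ) + 1) ≠ 0 := Nat.cast_add_one_ne_zero n
  have hbn : (∏ k, (bb b j k + (n : ℂ))) ≠ 0 :=
    Finset.prod_ne_zero_iff.mpr fun k _ => bb_add_ne b j hbj hbk k n
  field_simp
end

lemma eventually_QL_ne (L : List ℂ) : ∀ᶠ n : ℕ in atTop, QL L n ≠ 0 := by
  induction L with
  | nil => exact Eventually.of_forall fun n => one_ne_zero
  | cons d L ih =>
    filter_upwards [ih, eventually_add_ne d] with n h1 h2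
    simp only [QL, List.map_cons, List.prod_cons]
    exact mul_ne_zero h2 h1

lemma QL_cons (d : ℂ) (L : List ℂ) (n : ℕ) : QL (d :: L) n = ((n : ℂ) + d) * QL L n := by
  simp [QL]

lemma tendsto_QL_ratio (L : List ℂ) :
    Tendsto (fun n : ℕ => QL L (n + 1) / QL L n) atTop (𝓝 1) := by
  induction L with
  | nil => simpa [QL] using tendsto_const_nhds
  | cons d L ih =>
    have heq : ∀ n : ℕ, QL (d :: L) (n + 1) / QL (d :: L) n =
        (((n : ℂ) + (1 + d)) / ((n : ℂ) + d)) * (QL L (n + 1) / QL L n) := by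
      intro n
      rw [QL_cons, QL_cons, mul_div_mul_comm]
      push_cast
      ring_nf
    simp only [heq]
    simpa using (tendsto_ratio (1 + d) d).mul ih
/-- the one-step coefficient ratio -/
noncomputable def psi (L : List ℂ) (n : ℕ) : ℂ :=
  ((∏ i, (aa a b j i + (n : ℂ))) * QL L (n + 1)) /
    (((∏ k, (bb b j k + (n : ℂ))) * ((n : ℂ) + 1)) * QL L n)

lemma tendsto_psi (L : List ℂ) : Tendsto (psi a b j L) atTop (𝓝 1) := by
  have heq : ∀ n : ℕ, psi a b j L n =
      ((∏ i : Fin p, (((n : ℂ) + aa a b j i.castSucc) / ((n : ℂ) + bb b j i))) *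
        (((n : ℂ) + aa a b j (Fin.last p)) / ((n : ℂ) + 1))) *
        (QL L (n + 1) / QL L n) := by
    intro n
    rw [psi, mul_div_mul_comm]
    congr 1
    rw [Fin.prod_univ_castSucc, mul_div_mul_comm, ← Finset.prod_div_distrib]
    congr 1
    · exact Finset.prod_congr rfl fun i _ => by ring_nf
    · ring_nf
  rw [show (psi a b j L) = _ from funext heq]
  have h1 : Tendsto (fun n : ℕ => ∏ i : Fin p,
      (((n : ℂ) + aa a b j i.castSucc) / ((n : ℂ) + bb b j i))) atTop (𝓝 1) := by
    have := tendsto_finset_prod (univ : Finset (Fin p))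
      (f := fun i (n : ℕ) => ((n : ℂ) + aa a b j i.castSucc) / ((n : ℂ) + bb b j i))
      (a := fun _ => (1 : ℂ))
      (fun i _ => tendsto_ratio (aa a b j i.castSucc) (bb b j i))
    simpa using this
  have h2 := tendsto_ratio (aa a b j (Fin.last p)) 1
  have h3 := tendsto_QL_ratio L
  have := (h1.mul h2).mul h3
  simpa using this

lemma summable_norm (hbj : ∀ m : ℤ, b j ≠ (m : ℂ))
    (hbk : ∀ k, k ≠ j → ∀ m : ℤ, b k - b j ≠ (m : ℂ))
    (L : List ℂ) {s : ℝ} (h0 : 0 ≤ s) (h1 : s < 1) :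
    Summable fun n => ‖coA a b j n * QL L n‖ * s ^ n := by
  set r := (1 + s) / 2 with hr
  have hr1 : r < 1 := by rw [hr]; linarith
  have hrs : s < r := by rw [hr]; linarith
  apply summable_of_ratio_norm_eventually_le (r := r) hr1
  have hψ : Tendsto (fun n => ‖psi a b j L n‖ * s) atTop (𝓝 s) := by
    have := ((tendsto_psi a b j L).norm).mul_const s
    simpa using this
  have hev : ∀ᶠ n in atTop, ‖psi a b j L n‖ * s < r := hψ.eventually_lt_const hrs
  have hsh : ∀ᶠ n : ℕ in atTop, QL L (n + 1) ≠ 0 :=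
    (tendsto_add_atTop_nat 1).eventually (eventually_QL_ne L)
  filter_upwards [eventually_QL_ne L, hsh, hev] with n hQn hQn1 hlt
  have hbn : (∏ k, (bb b j k + (n : ℂ))) ≠ 0 :=
    Finset.prod_ne_zero_iff.mpr fun k _ => bb_add_ne b j hbj hbk k n
  have hn1 : ((n : ℂ) + 1) ≠ 0 := Nat.cast_add_one_ne_zero n
  have key : coA a b j (n + 1) * QL L (n + 1) = (coA a b j n * QL L n) * psi a b j L n := by
    rw [psi, ← mul_div_assoc, eq_div_iff (mul_ne_zero (mul_ne_zero hbn hn1) hQn)]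
    have h := coA_rec a b j hbj hbk n
    linear_combination (QL L (n + 1) * QL L n) * h
  rw [Real.norm_of_nonneg (by positivity), Real.norm_of_nonneg (by positivity)]
  calc ‖coA a b j (n + 1) * QL L (n + 1)‖ * s ^ (n + 1)
      = (‖coA a b j n * QL L n‖ * s ^ n) * (‖psi a b j L n‖ * s) := by
        rw [key, norm_mul, pow_succ]; ring
    _ ≤ (‖coA a b j n * QL L n‖ * s ^ n) * r :=
        mul_le_mul_of_nonneg_left (le_of_lt hlt) (by positivity)
    _ = r * (‖coA a b j n * QL L n‖ * s ^ n) := mul_comm _ _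

lemma summable_term (hbj : ∀ m : ℤ, b j ≠ (m : ℂ))
    (hbk : ∀ k, k ≠ j → ∀ m : ℤ, b k - b j ≠ (m : ℂ))
    (L : List ℂ) {z : ℂ} (hz : ‖z‖ < 1) :
    Summable fun n => coA a b j n * QL L n * z ^ n := by
  apply Summable.of_norm
  have := summable_norm a b j hbj hbk L (s := ‖z‖) (norm_nonneg z) hz
  simpa [norm_mul, norm_pow] using this

lemma QL_zero_cons (L : List ℂ) (n : ℕ) : QL ((0 : ℂ) :: L) n = (n : ℂ) * QL L n := by
  simp [QL_cons]

lemma hasDerivAt_GG (hbj : ∀ m : ℤ, b j ≠ (m : ℂ))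
    (hbk : ∀ k, k ≠ j → ∀ m : ℤ, b k - b j ≠ (m : ℂ))
    (L : List ℂ) {z : ℂ} (hz : ‖z‖ < 1) :
    HasDerivAt (GG a b j L)
      (∑' n : ℕ, coA a b j n * QL L n * (n : ℂ) * z ^ (n - 1)) z := by
  set t : ℝ := (‖z‖ + 1) / 2 with ht
  have ht0 : 0 < t := by positivity
  have ht1 : t < 1 := by rw [ht]; linarith
  have htz : ‖z‖ < t := by rw [ht]; linarith
  have hsum := summable_norm a b j hbj hbk ((0 : ℂ) :: L) (le_of_lt ht0) ht1
  have hu : Summable (fun n => ‖coA a b j n * QL ((0:ℂ) :: L) n‖ * t ^ n / t) :=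
    hsum.div_const t
  have main := hasDerivAt_tsum_of_isPreconnected (F := ℂ) (𝕜 := ℂ)
    (u := fun n => ‖coA a b j n * QL ((0:ℂ) :: L) n‖ * t ^ n / t)
    (g := fun n w => coA a b j n * QL L n * w ^ n)
    (g' := fun n w => coA a b j n * QL L n * (n : ℂ) * w ^ (n - 1))
    (t := Metric.ball (0 : ℂ) t) (y₀ := 0) (y := z)
    hu Metric.isOpen_ball (convex_ball (0:ℂ) t).isPreconnected
    ?_ ?_ ?_ ?_ ?_
  · exact main
  · intro n y _
    have := (hasDerivAt_pow n y).const_mul (coA a b j n * QL L n)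
    simpa [mul_assoc] using this
  · intro n y hy
    have hyt : ‖y‖ ≤ t := le_of_lt (by simpa [dist_zero_right] using hy)
    rcases n with _ | m
    · simp; positivity
    · show ‖coA a b j (m + 1) * QL L (m + 1) * (((m + 1 : ℕ)) : ℂ) * y ^ (m + 1 - 1)‖ ≤
        ‖coA a b j (m + 1) * QL ((0:ℂ) :: L) (m + 1)‖ * t ^ (m + 1) / t
      have hQ : QL ((0:ℂ) :: L) (m + 1) = ((m : ℂ) + 1) * QL L (m + 1) := by
        rw [QL_zero_cons]; push_cast; ring
      have hpow : ‖y ^ (m + 1 - 1)‖ ≤ t ^ m := by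
        simpa using pow_le_pow_left₀ (norm_nonneg y) hyt m
      have h1 : ‖coA a b j (m + 1) * QL ((0:ℂ) :: L) (m + 1)‖ * t ^ (m + 1) / t
          = ‖coA a b j (m + 1) * QL L (m + 1) * (((m + 1 : ℕ)) : ℂ)‖ * t ^ m := by
        rw [hQ, pow_succ]
        push_cast
        rw [norm_mul, norm_mul, norm_mul, norm_mul]
        field_simp
      rw [h1, norm_mul (coA a b j (m + 1) * QL L (m + 1) * _)]
      exact mul_le_mul_of_nonneg_left hpow (by positivity)
  · exact Metric.mem_ball_self ht0
  · apply summable_of_ne_finset_zero (s := {0})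
    intro n hn
    have : n ≠ 0 := by simpa using hn
    simp [zero_pow this]
  · simpa [dist_zero_right] using htz

lemma z_mul_deriv_sum (L : List ℂ) (z : ℂ) :
    z * (∑' n : ℕ, coA a b j n * QL L n * (n : ℂ) * z ^ (n - 1)) = GG a b j ((0:ℂ) :: L) z := by
  rw [GG, ← tsum_mul_left]
  apply tsum_congr
  intro n
  rcases n with _ | m
  · simp [QL_zero_cons]
  · rw [QL_zero_cons]
    have : ((m + 1 : ℕ)) - 1 = m := rfl
    rw [this, pow_succ]
    push_cast
    ring

lemma GG_split (hbj : ∀ m : ℤ, b j ≠ (m : ℂ))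
    (hbk : ∀ k, k ≠ j → ∀ m : ℤ, b k - b j ≠ (m : ℂ))
    (e : ℂ) (L : List ℂ) {z : ℂ} (hz : ‖z‖ < 1) :
    GG a b j (e :: L) z = GG a b j ((0:ℂ) :: L) z + e * GG a b j L z := by
  rw [GG, GG, GG, ← tsum_mul_left, ← Summable.tsum_add (summable_term a b j hbj hbk ((0:ℂ)::L) hz)
    ((summable_term a b j hbj hbk L hz).mul_left e)]
  apply tsum_congr
  intro n
  rw [QL_cons, QL_zero_cons]
  ring

lemma hasDerivAt_u (hbj : ∀ m : ℤ, b j ≠ (m : ℂ))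
    (hbk : ∀ k, k ≠ j → ∀ m : ℤ, b k - b j ≠ (m : ℂ))
    (L : List ℂ) {z : ℂ} (hz : z ∈ slitDisc) :
    HasDerivAt (fun w => w ^ (1 - b j) * GG a b j L w)
      ((1 - b j) * z ^ (1 - b j - 1) * GG a b j L z +
        z ^ (1 - b j) * ∑' n : ℕ, coA a b j n * QL L n * (n : ℂ) * z ^ (n - 1)) z := by
  exact ((Complex.hasStrictDerivAt_cpow_const
      (slitDisc_mem_slitPlane hz)).hasDerivAt).mul
    (hasDerivAt_GG a b j hbj hbk L (slitDisc_norm_lt_one hz))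

lemma theta_step (hbj : ∀ m : ℤ, b j ≠ (m : ℂ))
    (hbk : ∀ k, k ≠ j → ∀ m : ℤ, b k - b j ≠ (m : ℂ))
    (d : ℂ) (L : List ℂ) {z : ℂ} (hz : z ∈ slitDisc) :
    z * deriv (fun w => w ^ (1 - b j) * GG a b j L w) z +
      d * (z ^ (1 - b j) * GG a b j L z) =
    z ^ (1 - b j) * GG a b j (((1 - b j) + d) :: L) z := by
  rw [(hasDerivAt_u a b j hbj hbk L hz).deriv]
  have hz0 : z ≠ 0 := slitDisc_ne_zero hz
  have hc : z ^ (1 - b j - 1) * z = z ^ (1 - b j) := by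
    rw [Complex.cpow_sub _ _ hz0, Complex.cpow_one, div_mul_cancel₀ _ hz0]
  have hS := z_mul_deriv_sum a b j L z
  rw [GG_split a b j hbj hbk ((1 - b j) + d) L (slitDisc_norm_lt_one hz), ← hS]
  linear_combination ((1 - b j) * GG a b j L z) * hc

lemma QL_ofFn {m : ℕ} (f : Fin m → ℂ) (n : ℕ) :
    QL (List.ofFn f) n = ∏ i, ((n : ℂ) + f i) := by
  rw [QL, List.map_ofFn, List.prod_ofFn]
  rfl

lemma comp_eq (hbj : ∀ m : ℤ, b j ≠ (m : ℂ))
    (hbk : ∀ k, k ≠ j → ∀ m : ℤ, b k - b j ≠ (m : ℂ))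
    (L0 ds : List ℂ) : ∀ z ∈ slitDisc,
    ((ds.map thetaAdd).foldr (fun op g => op g)
        (fun w => w ^ (1 - b j) * GG a b j L0 w)) z
      = z ^ (1 - b j) * GG a b j ((ds.map fun d => (1 - b j) + d) ++ L0) z := by
  induction ds with
  | nil => intro z hz; rfl
  | cons d ds ih =>
    intro z hz
    simp only [List.map_cons, List.foldr_cons]
    have hev : ((ds.map thetaAdd).foldr (fun op g => op g)
        (fun w => w ^ (1 - b j) * GG a b j L0 w)) =ᶠ[𝓝 z]
        (fun w => w ^ (1 - b j) * GG a b j ((ds.map fun d => (1 - b j) + d) ++ L0) w) :=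
      Filter.eventuallyEq_of_mem (isOpen_slitDisc.mem_nhds hz) ih
    show thetaAdd d _ z = _
    rw [thetaAdd]
    rw [hev.deriv_eq, ih z hz]
    exact theta_step a b j hbj hbk d ((ds.map fun d => (1 - b j) + d) ++ L0) hz

lemma GG_shift (hbj : ∀ m : ℤ, b j ≠ (m : ℂ))
    (hbk : ∀ k, k ≠ j → ∀ m : ℤ, b k - b j ≠ (m : ℂ))
    {z : ℂ} (hz : ‖z‖ < 1) :
    GG a b j ((1 - b j) ::
        (((List.ofFn fun i : Fin p => b i - 1).map fun d => (1 - b j) + d) ++ [])) z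
      = z * GG a b j (((List.ofFn a).map fun d => (1 - b j) + d) ++ []) z := by
  have hofb : ((List.ofFn fun i : Fin p => b i - 1).map fun d => (1 - b j) + d) ++ []
      = List.ofFn (fun i : Fin p => (1 - b j) + (b i - 1)) := by
    rw [List.append_nil, List.map_ofFn]; rfl
  have hofa : ((List.ofFn a).map fun d => (1 - b j) + d) ++ []
      = List.ofFn (fun i : Fin (p + 1) => (1 - b j) + a i) := by
    rw [List.append_nil, List.map_ofFn]; rfl
  rw [hofb, hofa]
  have hsum := summable_term a b j hbj hbk
    ((1 - b j) :: List.ofFn (fun i : Fin p => (1 - b j) + (b i - 1))) hz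
  rw [GG, GG, Summable.tsum_eq_zero_add hsum, ← tsum_mul_left]
  have h0 : coA a b j 0 * QL ((1 - b j) ::
      List.ofFn (fun i : Fin p => (1 - b j) + (b i - 1))) 0 * z ^ 0 = 0 := by
    rw [QL_cons, QL_ofFn]
    have : ∏ i, ((0 : ℕ) + ((1 - b j) + (b i - 1))) = 0 :=
      Finset.prod_eq_zero (Finset.mem_univ j) (by push_cast; ring)
    rw [this]
    ring
  rw [h0, zero_add]
  apply tsum_congr
  intro n
  have hQeq : QL ((1 - b j) :: List.ofFn (fun i : Fin p => (1 - b j) + (b i - 1))) (n + 1)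
      = (∏ k, (bb b j k + (n : ℂ))) * ((n : ℂ) + 1) := by
    rw [QL_cons, QL_ofFn]
    rw [← Finset.mul_prod_erase univ (fun i => ((n + 1 : ℕ) : ℂ) + ((1 - b j) + (b i - 1)))
        (Finset.mem_univ j),
      ← Finset.mul_prod_erase univ (fun k => bb b j k + (n : ℂ)) (Finset.mem_univ j)]
    have hprod : ∏ i ∈ univ.erase j, (((n + 1 : ℕ) : ℂ) + ((1 - b j) + (b i - 1)))
        = ∏ i ∈ univ.erase j, (bb b j i + (n : ℂ)) := by
      refine Finset.prod_congr rfl fun i hi => ?_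
      rw [bb, if_neg (Finset.ne_of_mem_erase hi)]
      push_cast; ring
    rw [hprod, bb, if_pos rfl]
    push_cast; ring
  have key : coA a b j (n + 1) *
      QL ((1 - b j) :: List.ofFn (fun i : Fin p => (1 - b j) + (b i - 1))) (n + 1)
      = coA a b j n * QL (List.ofFn (fun i : Fin (p + 1) => (1 - b j) + a i)) n := by
    rw [hQeq, QL_ofFn]
    have h := coA_rec a b j hbj hbk n
    rw [← mul_assoc] at h ⊢
    rw [h]
    congr 1
    refine Finset.prod_congr rfl fun i _ => ?_
    rw [aa]; ring
  rw [pow_succ]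
  linear_combination z ^ n * z * key
end HypAux

open Filter Topology

/-- The solution u_j(z) = z^{1−b_j}·F(a₀−b_j+1,…; {b_k−b_j+1}_{k≠j}, 2−b_j; z)
is annihilated on the slit disc by the hypergeometric operator with parameters
a₀,…,a_p; b₁,…,b_p. -/
theorem stmt_10 (p : ℕ) (a : Fin (p + 1) → ℂ) (b : Fin p → ℂ) (j : Fin p)
    (hbj : ∀ m : ℤ, b j ≠ (m : ℂ))
    (hbk : ∀ k, k ≠ j → ∀ m : ℤ, b k - b j ≠ (m : ℂ))
    (hb : ∀ k, ∀ m : ℕ, b k ≠ -(m : ℂ)) :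
    ∀ z ∈ slitDisc,
      deriv ((List.ofFn fun i : Fin p => thetaAdd (b i - 1)).foldr
          (fun op g => op g)
          (fun w => w ^ (1 - b j) *
            hyperF (fun i => a i - b j + 1)
              (fun k => if k = j then 2 - b j else b k - b j + 1) w)) z
        = ((List.ofFn fun i : Fin (p + 1) => thetaAdd (a i)).foldr
            (fun op g => op g)
            (fun w => w ^ (1 - b j) *
              hyperF (fun i => a i - b j + 1)
                (fun k => if k = j then 2 - b j else b k - b j + 1) w)) z := by
  intro z hz
  have hfun : (fun w => w ^ (1 - b j) *
      hyperF (fun i => a i - b j + 1)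
        (fun k => if k = j then 2 - b j else b k - b j + 1) w)
      = (fun w => w ^ (1 - b j) * HypAux.GG a b j [] w) := by
    funext w
    congr 1
    rw [hyperF, HypAux.GG]
    refine tsum_congr fun n => ?_
    rw [HypAux.coA, HypAux.QL]
    simp only [HypAux.aa, HypAux.bb, List.map_nil, List.prod_nil, mul_one]
  rw [hfun]
  have hLb : (List.ofFn fun i : Fin p => thetaAdd (b i - 1))
      = (List.ofFn fun i : Fin p => b i - 1).map thetaAdd := by
    rw [List.map_ofFn]; rfl
  have hLa : (List.ofFn fun i : Fin (p + 1) => thetaAdd (a i))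
      = (List.ofFn a).map thetaAdd := by
    rw [List.map_ofFn]; rfl
  rw [hLb, hLa]
  rw [HypAux.comp_eq a b j hbj hbk [] (List.ofFn a) z hz]
  set Lb : List ℂ := ((List.ofFn fun i : Fin p => b i - 1).map fun d => (1 - b j) + d) ++ []
    with hLbdef
  set La : List ℂ := ((List.ofFn a).map fun d => (1 - b j) + d) ++ [] with hLadef
  have hev : (((List.ofFn fun i : Fin p => b i - 1).map thetaAdd).foldr (fun op g => op g)
      (fun w => w ^ (1 - b j) * HypAux.GG a b j [] w)) =ᶠ[𝓝 z]
      (fun w => w ^ (1 - b j) * HypAux.GG a b j Lb w) :=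
    Filter.eventuallyEq_of_mem (HypAux.isOpen_slitDisc.mem_nhds hz)
      (HypAux.comp_eq a b j hbj hbk [] (List.ofFn fun i : Fin p => b i - 1))
  rw [hev.deriv_eq, (HypAux.hasDerivAt_u a b j hbj hbk Lb hz).deriv]
  have hz0 : z ≠ 0 := HypAux.slitDisc_ne_zero hz
  have hzn : ‖z‖ < 1 := HypAux.slitDisc_norm_lt_one hz
  have hc : z ^ (1 - b j - 1) * z = z ^ (1 - b j) := by
    rw [Complex.cpow_sub _ _ hz0, Complex.cpow_one, div_mul_cancel₀ _ hz0]
  set S : ℂ := ∑' n : ℕ, HypAux.coA a b j n * HypAux.QL Lb n * (n : ℂ) * z ^ (n - 1) with hSdef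
  have hS : z * S = HypAux.GG a b j ((0:ℂ) :: Lb) z := HypAux.z_mul_deriv_sum a b j Lb z
  have hsplit : HypAux.GG a b j ((1 - b j) :: Lb) z
      = HypAux.GG a b j ((0:ℂ) :: Lb) z + (1 - b j) * HypAux.GG a b j Lb z :=
    HypAux.GG_split a b j hbj hbk (1 - b j) Lb hzn
  have hshift : HypAux.GG a b j ((1 - b j) :: Lb) z = z * HypAux.GG a b j La z :=
    HypAux.GG_shift a b j hbj hbk hzn
  linear_combination (HypAux.GG a b j La z - S) * hc + z ^ (1 - b j - 1) * hS
    - z ^ (1 - b j - 1) * hsplit + z ^ (1 - b j - 1) * hshift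
end
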